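/- Let F be a Frobenius category which is essentially small, idempotent complete, linear over a finite field, and Hom-finite, and whose stable category F̄ is left locally homologically finite. Then the relative Euler form ⟨A,B⟩_{(F,F̄)} = (|Hom_F(A,B)| / |Hom_{F̄}(A,B)|) · Π_{i>0} |Ext^{-i}_{F̄}(A,B)|^{(-1)^{(i-1)}} descends to a well-defined biadditive map ⟨·,·⟩_{(F,F̄)} : K_0(F) × K_0(F) → Q^×; that is, for every conflation A_1 ↣ A_2 ↠ A_3 in F and every object B, one has ⟨A_2,B⟩_{(F,F̄)} = ⟨A_1,B⟩_{(F,F̄)} · ⟨A_3,B⟩_{(F,F̄)} and ⟨B,A_2⟩_{(F,F̄)} = ⟨B,A_1⟩_{(F,F̄)} · ⟨B,A_3⟩_{(F,F̄)}. -/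

import Mathlib

/-!
Common definitions for formalizing "semi-derived Hall algebras" (Gorsky, arXiv:1409.6798):
Quillen exact structures, Frobenius categories, conflations and (Yoneda-style) `Ext`-sets,
Hall algebra structure constants, stable categories, suspension/syzygy data,
Grothendieck groups, and localizations of Hall algebras.
-/

open CategoryTheory CategoryTheory.Limits ZeroObject

universe w v u v' u'

namespace HallPaper

section IsoClasses

variable {𝒞 : Type u} [Category.{v} 𝒞] {𝒟 : Type u'} [Category.{v'} 𝒟]

/-- The set of isomorphism classes of objects of a category. -/
def IsoCl (𝒞 : Type u) [Category.{v} 𝒞] : Type u :=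
  Quotient (isIsomorphicSetoid 𝒞)

/-- The isomorphism class of an object. -/
def skel (A : 𝒞) : IsoCl 𝒞 := Quotient.mk (isIsomorphicSetoid 𝒞) A

/-- The basis vector of the Hall module (the `ℚ`-vector space with basis the isomorphism
classes of objects) corresponding to an object. -/
noncomputable def hallBasis (A : 𝒞) : IsoCl 𝒞 →₀ ℚ := Finsupp.single (skel A) 1

/-- The map on isomorphism classes induced by a functor. -/
def skelMap (F : 𝒞 ⥤ 𝒟) : IsoCl 𝒞 → IsoCl 𝒟 :=
  @Quotient.map _ _ (isIsomorphicSetoid 𝒞) (isIsomorphicSetoid 𝒟) F.obj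
    (fun _ _ h => h.elim fun e => ⟨F.mapIso e⟩)

/-- The `ℚ`-linear map between Hall modules induced by a functor,
`[M] ↦ [F(M)]` on basis vectors. -/
noncomputable def hallMap (F : 𝒞 ⥤ 𝒟) : (IsoCl 𝒞 →₀ ℚ) →ₗ[ℚ] (IsoCl 𝒟 →₀ ℚ) :=
  Finsupp.lmapDomain ℚ ℚ (skelMap F)

end IsoClasses

/-- A Quillen exact structure on an additive category, given by the class of conflations
(admissible short exact sequences) `X ↣ Y ↠ Z`, encoded as the predicate `conf i p`. -/
structure ExactStructure (𝒞 : Type u) [Category.{v} 𝒞] [Preadditive 𝒞] [HasZeroObject 𝒞]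
    [HasBinaryBiproducts 𝒞] where
  /-- `conf i p` says that `X ↣ Y ↠ Z` is a conflation. -/
  conf : ∀ {X Y Z : 𝒞}, (X ⟶ Y) → (Y ⟶ Z) → Prop
  comp_zero : ∀ {X Y Z : 𝒞} {i : X ⟶ Y} {p : Y ⟶ Z}, conf i p → i ≫ p = 0
  is_kernel : ∀ {X Y Z : 𝒞} {i : X ⟶ Y} {p : Y ⟶ Z} (h : conf i p),
    Nonempty (IsLimit (KernelFork.ofι i (comp_zero h)))
  is_cokernel : ∀ {X Y Z : 𝒞} {i : X ⟶ Y} {p : Y ⟶ Z} (h : conf i p),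
    Nonempty (IsColimit (CokernelCofork.ofπ p (comp_zero h)))
  conf_iso : ∀ {X Y Z X' Y' Z' : 𝒞} {i : X ⟶ Y} {p : Y ⟶ Z}
    (eX : X ≅ X') (eY : Y ≅ Y') (eZ : Z ≅ Z') {i' : X' ⟶ Y'} {p' : Y' ⟶ Z'},
    conf i p → i ≫ eY.hom = eX.hom ≫ i' → p ≫ eZ.hom = eY.hom ≫ p' → conf i' p'
  split_conf : ∀ X Y : 𝒞, conf (biprod.inl : X ⟶ X ⊞ Y) (biprod.snd : X ⊞ Y ⟶ Y)
  infl_comp : ∀ {X Y Z : 𝒞} (i : X ⟶ Y) (j : Y ⟶ Z),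
    (∃ (W : 𝒞) (p : Y ⟶ W), conf i p) → (∃ (W : 𝒞) (p : Z ⟶ W), conf j p) →
    ∃ (W : 𝒞) (p : Z ⟶ W), conf (i ≫ j) p
  defl_comp : ∀ {X Y Z : 𝒞} (p : X ⟶ Y) (q : Y ⟶ Z),
    (∃ (W : 𝒞) (i : W ⟶ X), conf i p) → (∃ (W : 𝒞) (i : W ⟶ Y), conf i q) →
    ∃ (W : 𝒞) (i : W ⟶ X), conf i (p ≫ q)
  pushout_infl : ∀ {X Y Z X' : 𝒞} {i : X ⟶ Y} {p : Y ⟶ Z}, conf i p → ∀ f : X ⟶ X',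
    ∃ (Y' : 𝒞) (i' : X' ⟶ Y') (g : Y ⟶ Y'), IsPushout i f g i' ∧
      ∃ (W : 𝒞) (p' : Y' ⟶ W), conf i' p'
  pullback_defl : ∀ {X Y Z Z' : 𝒞} {i : X ⟶ Y} {p : Y ⟶ Z}, conf i p → ∀ f : Z' ⟶ Z,
    ∃ (Y' : 𝒞) (p' : Y' ⟶ Z') (g : Y' ⟶ Y), IsPullback g p' p f ∧
      ∃ (W : 𝒞) (i' : W ⟶ Y'), conf i' p'

section Exact

variable {𝒞 : Type u} [Category.{v} 𝒞] [Preadditive 𝒞] [HasZeroObject 𝒞] [HasBinaryBiproducts 𝒞]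

/-- An object `P` is projective (relative to an exact structure) if any morphism from `P`
lifts along every deflation. Equivalently, `Ext¹(P, -) = 0`. -/
def ExactStructure.Proj (E : ExactStructure 𝒞) (P : 𝒞) : Prop :=
  ∀ ⦃X Y Z : 𝒞⦄ (i : X ⟶ Y) (p : Y ⟶ Z), E.conf i p → ∀ f : P ⟶ Z, ∃ g : P ⟶ Y, g ≫ p = f

/-- An object `I` is injective (relative to an exact structure) if any morphism to `I`
extends along every inflation. Equivalently, `Ext¹(-, I) = 0`. -/
def ExactStructure.Inj (E : ExactStructure 𝒞) (I : 𝒞) : Prop :=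
  ∀ ⦃X Y Z : 𝒞⦄ (i : X ⟶ Y) (p : Y ⟶ Z), E.conf i p → ∀ f : X ⟶ I, ∃ g : Y ⟶ I, i ≫ g = f

/-- A Frobenius category: an exact category with enough projectives and enough injectives,
in which the projective objects coincide with the injective objects. -/
structure IsFrobenius (E : ExactStructure 𝒞) : Prop where
  enough_proj : ∀ X : 𝒞, ∃ (P W : 𝒞) (i : W ⟶ P) (p : P ⟶ X), E.Proj P ∧ E.conf i p
  enough_inj : ∀ X : 𝒞, ∃ (I W : 𝒞) (i : X ⟶ I) (p : I ⟶ W), E.Inj I ∧ E.conf i p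
  proj_iff_inj : ∀ P : 𝒞, E.Proj P ↔ E.Inj P

/-- A conflation `C ↣ mid ↠ A`, i.e. an extension of `A` by `C`. -/
structure Conf (E : ExactStructure 𝒞) (A C : 𝒞) where
  mid : 𝒞
  incl : C ⟶ mid
  quot : mid ⟶ A
  isConf : E.conf incl quot

/-- Equivalence of extensions: an isomorphism of the middle terms commuting with the
structure maps (and inducing the identity on the end terms). -/
def ConfRel (E : ExactStructure 𝒞) {A C : 𝒞} (e e' : Conf E A C) : Prop :=
  ∃ φ : e.mid ≅ e'.mid, e.incl ≫ φ.hom = e'.incl ∧ φ.hom ≫ e'.quot = e.quot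

/-- `Ext¹(A, C)`: the set of equivalence classes of extensions of `A` by `C`. -/
def Ext1 (E : ExactStructure 𝒞) (A C : 𝒞) : Type (max u v) :=
  Quot (ConfRel E (A := A) (C := C))

/-- The class of a conflation in `Ext¹`. -/
def Ext1.mk (E : ExactStructure 𝒞) {A C : 𝒞} (e : Conf E A C) : Ext1 E A C :=
  Quot.mk _ e

/-- The class in `Ext¹(A,C)` of the split extension `C ↣ C ⊕ A ↠ A`. -/
noncomputable def splitExt (E : ExactStructure 𝒞) (A C : 𝒞) : Ext1 E A C :=
  Ext1.mk E ⟨C ⊞ A, biprod.inl, biprod.snd, E.split_conf C A⟩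

/-- `|Ext¹(A, C)_B|`: the number of classes of extensions of `A` by `C` whose middle term is
isomorphic to `B`. -/
noncomputable def ext1CardWith (E : ExactStructure 𝒞) (A C B : 𝒞) : ℕ :=
  Nat.card {x : Ext1 E A C // ∃ e : Conf E A C, Ext1.mk E e = x ∧ Nonempty (e.mid ≅ B)}

/-- The structure constant `|Ext¹(A, C)_B| / |Hom(A, C)|` of the Hall algebra. -/
noncomputable def hallCoeff (E : ExactStructure 𝒞) (A C B : 𝒞) : ℚ :=
  (ext1CardWith E A C B : ℚ) / (Nat.card (A ⟶ C) : ℚ)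

/-- A bilinear multiplication on the Hall module with the Hall structure constants:
`[A] ⋄ [C] = ∑_B (|Ext¹(A,C)_B| / |Hom(A,C)|) [B]`. -/
structure HallMul (E : ExactStructure 𝒞) where
  mul : (IsoCl 𝒞 →₀ ℚ) →ₗ[ℚ] (IsoCl 𝒞 →₀ ℚ) →ₗ[ℚ] (IsoCl 𝒞 →₀ ℚ)
  mul_basis : ∀ A C B : 𝒞, mul (hallBasis A) (hallBasis C) (skel B) = hallCoeff E A C B

/-- A morphism factors through a projective-injective object. -/
def FactorsThruProj (E : ExactStructure 𝒞) {X Y : 𝒞} (f : X ⟶ Y) : Prop :=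
  ∃ (P : 𝒞) (u : X ⟶ P) (v : P ⟶ Y), E.Proj P ∧ u ≫ v = f

/-- Morphism space in the stable category: morphisms of `𝒞` modulo those factoring
through projective-injective objects. -/
def StHom (E : ExactStructure 𝒞) (X Y : 𝒞) : Type v :=
  Quot (fun f g : X ⟶ Y => FactorsThruProj E (f - g))

/-- The class in the stable category of a morphism. -/
def StHom.mk (E : ExactStructure 𝒞) {X Y : 𝒞} (f : X ⟶ Y) : StHom E X Y :=
  Quot.mk _ f

/-- Two objects are isomorphic in the stable category. -/
def StIso (E : ExactStructure 𝒞) (X Y : 𝒞) : Prop :=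
  ∃ (f : X ⟶ Y) (g : Y ⟶ X),
    StHom.mk E (f ≫ g) = StHom.mk E (𝟙 X) ∧ StHom.mk E (g ≫ f) = StHom.mk E (𝟙 Y)

/-- The isomorphism classes of objects of the stable category. -/
def StSkel (E : ExactStructure 𝒞) : Type u := Quot (StIso E)

/-- The stable isomorphism class of an object. -/
def stCl (E : ExactStructure 𝒞) (X : 𝒞) : StSkel E := Quot.mk _ X

/-- Suspension data for a Frobenius category: for each object `X` a conflation
`X ↣ I X ↠ S X` with `I X` projective-injective; `S` implements the suspension functor `Σ`
of the stable category on objects. -/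
structure SuspData (E : ExactStructure 𝒞) where
  S : 𝒞 → 𝒞
  I : 𝒞 → 𝒞
  ins : ∀ X : 𝒞, X ⟶ I X
  out : ∀ X : 𝒞, I X ⟶ S X
  proj : ∀ X : 𝒞, E.Proj (I X)
  isConf : ∀ X : 𝒞, E.conf (ins X) (out X)

variable {E : ExactStructure 𝒞}

/-- Iterated suspension `Σⁿ` on objects. -/
def SIter (Sd : SuspData E) : ℕ → 𝒞 → 𝒞
  | 0, X => X
  | n + 1, X => Sd.S (SIter Sd n X)

/-- Syzygy data for a Frobenius category: for each object `X` a conflation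
`Ω X ↣ P X ↠ X` with `P X` projective-injective (a choice of projective covers, giving
projective resolutions). -/
structure SyzData (E : ExactStructure 𝒞) where
  Om : 𝒞 → 𝒞
  P : 𝒞 → 𝒞
  ins : ∀ X : 𝒞, Om X ⟶ P X
  out : ∀ X : 𝒞, P X ⟶ X
  proj : ∀ X : 𝒞, E.Proj (P X)
  isConf : ∀ X : 𝒞, E.conf (ins X) (out X)

/-- Iterated syzygy `Ωⁿ` on objects. -/
def OmIter (D : SyzData E) : ℕ → 𝒞 → 𝒞
  | 0, X => X
  | n + 1, X => D.Om (OmIter D n X)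

/-- The differential `P(Ωⁿ⁺¹ M) ⟶ P(Ωⁿ M)` of the projective resolution
`⋯ → P(Ω² M) → P(Ω M) → P(M) → 0` of `M` determined by syzygy data. -/
def resDiff (D : SyzData E) (n : ℕ) (M : 𝒞) :
    D.P (OmIter D (n + 1) M) ⟶ D.P (OmIter D n M) :=
  D.out (OmIter D (n + 1) M) ≫ D.ins (OmIter D n M)

/-- Cocycles for `Ext^(q+1)(M, N)`: morphisms `P(Ω^(q+1) M) ⟶ N` killed by the differential. -/
def extCocycle (D : SyzData E) (q : ℕ) (M N : 𝒞) : Type v :=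
  {f : D.P (OmIter D (q + 1) M) ⟶ N // resDiff D (q + 1) M ≫ f = 0}

/-- `Ext^(q+1)(M, N)` in the exact category: the `(q+1)`-st cohomology of
`Hom(R(M)•, N)` for the projective resolution `R(M)•` of `M` given by the syzygy data. -/
def extGrp (D : SyzData E) (q : ℕ) (M N : 𝒞) : Type v :=
  Quot (fun f g : extCocycle D q M N =>
    ∃ h : D.P (OmIter D q M) ⟶ N, f.1 - g.1 = resDiff D q M ≫ h)

/-- The truncated relative Euler form
`⟨A,B⟩ = (|Hom_F(A,B)| / |Hom_F̄(A,B)|) ⬝ ∏_{0 < i ≤ N} |Ext^{-i}_F̄(A,B)|^((-1)^(i-1))`,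
where `Ext^{-i}_F̄(A, B) = Hom_F̄(Σⁱ A, B)`.  (Under the "left locally homologically finite"
assumption all but finitely many factors are trivial, so for `N` large enough this is the
relative Euler form.) -/
noncomputable def relEulerAt (Sd : SuspData E) (N : ℕ) (A B : 𝒞) : ℚ :=
  ((Nat.card (A ⟶ B) : ℚ) / (Nat.card (StHom E A B) : ℚ)) *
    ∏ i ∈ Finset.range N, ((Nat.card (StHom E (SIter Sd (i + 1) A) B) : ℚ) ^ ((-1 : ℤ) ^ i))

/-- The truncated structure constants of the derived Hall algebra of the stable category `F̄`:
`(|Ext¹_F̄(A,C)_β| / |Hom_F̄(A,C)|) ⬝ ∏_{0 < i ≤ N} |Ext^{-i}_F̄(A,C)|^((-1)^(i-1))`, where,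
by dévissage, `Ext¹_F̄(A,C)_β` is identified with the set of classes of conflations
`C ↣ mid ↠ A` in `F` whose middle term has stable isomorphism class `β`. -/
noncomputable def stDhCoeffAt (Sd : SuspData E) (N : ℕ) (A C : 𝒞) (β : StSkel E) : ℚ :=
  ((Nat.card {x : Ext1 E A C // ∃ e : Conf E A C, Ext1.mk E e = x ∧ stCl E e.mid = β} : ℚ) /
      (Nat.card (StHom E A C) : ℚ)) *
    ∏ i ∈ Finset.range N, ((Nat.card (StHom E (SIter Sd (i + 1) A) C) : ℚ) ^ ((-1 : ℤ) ^ i))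

end Exact

/-- A bundled associative unital `ℚ`-algebra. -/
structure BundledQAlg : Type (w + 1) where
  carrier : Type w
  [ring : Ring carrier]
  [alg : Algebra ℚ carrier]

attribute [instance] BundledQAlg.ring BundledQAlg.alg

section Localization

variable {𝒞 : Type u} [Category.{v} 𝒞] [Preadditive 𝒞] [HasZeroObject 𝒞] [HasBinaryBiproducts 𝒞]

/-- A realization of the semi-derived Hall algebra `SDH(F, P(F))`: the localization of the
Hall algebra `H(F)` at the classes `[P]` of all projective-injective objects, presented by its
universal property. -/
structure HallLocalization (E : ExactStructure 𝒞) (hm : HallMul E) (A : BundledQAlg.{w}) where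
  φ : (IsoCl 𝒞 →₀ ℚ) →ₗ[ℚ] A.carrier
  mul_hom : ∀ x y, φ (hm.mul x y) = φ x * φ y
  one_hom : φ (hallBasis (0 : 𝒞)) = 1
  inverts : ∀ P : 𝒞, E.Proj P → IsUnit (φ (hallBasis P))
  universal : ∀ (B : BundledQAlg.{w}) (ψ : (IsoCl 𝒞 →₀ ℚ) →ₗ[ℚ] B.carrier),
    (∀ x y, ψ (hm.mul x y) = ψ x * ψ y) → ψ (hallBasis (0 : 𝒞)) = 1 →
    (∀ P : 𝒞, E.Proj P → IsUnit (ψ (hallBasis P))) →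
    ∃! χ : A.carrier →+* B.carrier, ∀ x, χ (φ x) = ψ x

/-- The quantum torus of projective-injectives inside the semi-derived Hall algebra:
the subalgebra generated by the classes `[P]` of projective-injective objects and their
inverses. -/
def quantumTorus {E : ExactStructure 𝒞} {hm : HallMul E} {A : BundledQAlg.{w}}
    (L : HallLocalization E hm A) : Subalgebra ℚ A.carrier :=
  Algebra.adjoin ℚ {x : A.carrier | ∃ P : 𝒞, E.Proj P ∧
    (x = L.φ (hallBasis P) ∨ (x * L.φ (hallBasis P) = 1 ∧ L.φ (hallBasis P) * x = 1))}

end Localization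

section K0

variable {𝒞 : Type u} [Category.{v} 𝒞] [Preadditive 𝒞] [HasZeroObject 𝒞] [HasBinaryBiproducts 𝒞]

/-- The relations defining the split Grothendieck group of an additive category:
isomorphic objects are identified and `[A ⊕ B] = [A] + [B]`. -/
def splitRelations (𝒞 : Type u) [Category.{v} 𝒞] [Preadditive 𝒞] [HasZeroObject 𝒞]
    [HasBinaryBiproducts 𝒞] : Set (FreeAbelianGroup 𝒞) :=
  {x | ∃ A B : 𝒞, Nonempty (A ≅ B) ∧
        x = FreeAbelianGroup.of A - FreeAbelianGroup.of B} ∪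
  {x | ∃ A B : 𝒞, x = FreeAbelianGroup.of (A ⊞ B)
        - FreeAbelianGroup.of A - FreeAbelianGroup.of B}

/-- The split Grothendieck group `K₀^split` of an additive category. -/
def K0split (𝒞 : Type u) [Category.{v} 𝒞] [Preadditive 𝒞] [HasZeroObject 𝒞]
    [HasBinaryBiproducts 𝒞] : Type u :=
  FreeAbelianGroup 𝒞 ⧸ AddSubgroup.closure (splitRelations 𝒞)

noncomputable instance : AddCommGroup (K0split 𝒞) :=
  QuotientAddGroup.Quotient.addCommGroup _

/-- The class of an object in the split Grothendieck group. -/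
def K0split.gen (A : 𝒞) : K0split 𝒞 :=
  QuotientAddGroup.mk (FreeAbelianGroup.of A)

/-- The relations defining the Grothendieck group of the (split exact) full subcategory of
projective-injective objects. -/
def projRelations (E : ExactStructure 𝒞) : Set (FreeAbelianGroup {X : 𝒞 // E.Proj X}) :=
  {x | ∃ A B : {X : 𝒞 // E.Proj X}, Nonempty (A.1 ≅ B.1) ∧
        x = FreeAbelianGroup.of A - FreeAbelianGroup.of B} ∪
  {x | ∃ A B C : {X : 𝒞 // E.Proj X}, Nonempty (C.1 ≅ A.1 ⊞ B.1) ∧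
        x = FreeAbelianGroup.of C - FreeAbelianGroup.of A - FreeAbelianGroup.of B}

/-- The Grothendieck group `K₀(P(F))` of the full subcategory of projective-injective
objects (its exact structure splits, so this is the split Grothendieck group). -/
def K0P (E : ExactStructure 𝒞) : Type u :=
  FreeAbelianGroup {X : 𝒞 // E.Proj X} ⧸ AddSubgroup.closure (projRelations E)

noncomputable instance (E : ExactStructure 𝒞) : AddCommGroup (K0P E) :=
  QuotientAddGroup.Quotient.addCommGroup _

/-- The class of a projective-injective object in `K₀(P(F))`. -/
def K0P.gen (E : ExactStructure 𝒞) (X : 𝒞) (hX : E.Proj X) : K0P E :=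
  QuotientAddGroup.mk (FreeAbelianGroup.of ⟨X, hX⟩)

end K0

section StMap

variable {𝒞' : Type u'} [Category.{v'} 𝒞'] [Preadditive 𝒞'] [HasZeroObject 𝒞']
  [HasBinaryBiproducts 𝒞']
variable {𝒞 : Type u} [Category.{v} 𝒞] [Preadditive 𝒞] [HasZeroObject 𝒞] [HasBinaryBiproducts 𝒞]

/-- The map induced on stable morphism spaces by an additive functor sending
projective-injectives to projective-injectives. -/
def stMap (E' : ExactStructure 𝒞') (E : ExactStructure 𝒞) (F : 𝒞' ⥤ 𝒞) [F.Additive]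
    (hproj : ∀ P : 𝒞', E'.Proj P → E.Proj (F.obj P)) (X Y : 𝒞') :
    StHom E' X Y → StHom E (F.obj X) (F.obj Y) :=
  Quot.map (fun f => F.map f) (by
    rintro f g ⟨P, u, v, hP, huv⟩
    exact ⟨F.obj P, F.map u, F.map v, hproj P hP, by rw [← F.map_comp, huv, F.map_sub]⟩)

end StMap


namespace Euler

variable {𝒞 : Type u} [Category.{v} 𝒞] [Preadditive 𝒞] [HasZeroObject 𝒞]
  [HasBinaryBiproducts 𝒞]
variable {E : ExactStructure 𝒞}

lemma conf_mono {X Y Z : 𝒞} {i : X ⟶ Y} {p : Y ⟶ Z} (h : E.conf i p) : Mono i := by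
  obtain ⟨hl⟩ := E.is_kernel h
  exact ⟨fun a b hab => Fork.IsLimit.hom_ext hl hab⟩

lemma conf_epi {X Y Z : 𝒞} {i : X ⟶ Y} {p : Y ⟶ Z} (h : E.conf i p) : Epi p := by
  obtain ⟨hc⟩ := E.is_cokernel h
  exact ⟨fun a b hab => Cofork.IsColimit.hom_ext hc hab⟩

lemma conf_lift {X Y Z : 𝒞} {i : X ⟶ Y} {p : Y ⟶ Z} (h : E.conf i p) {T : 𝒞}
    (f : T ⟶ Y) (hf : f ≫ p = 0) : ∃ e : T ⟶ X, e ≫ i = f := by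
  obtain ⟨hl⟩ := E.is_kernel h
  obtain ⟨l, hl'⟩ := Fork.IsLimit.lift' hl f (by simp [hf])
  exact ⟨l, hl'⟩

lemma conf_desc {X Y Z : 𝒞} {i : X ⟶ Y} {p : Y ⟶ Z} (h : E.conf i p) {T : 𝒞}
    (f : Y ⟶ T) (hf : i ≫ f = 0) : ∃ g : Z ⟶ T, p ≫ g = f := by
  obtain ⟨hc⟩ := E.is_cokernel h
  obtain ⟨l, hl'⟩ := Cofork.IsColimit.desc' hc f (by simp [hf])
  exact ⟨l, hl'⟩

/-- Replace the cokernel part of a conflation by another cokernel. -/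
lemma conf_replace_cokernel {X Y Z W : 𝒞} {i : X ⟶ Y} {q : Y ⟶ W} (h : E.conf i q)
    {p : Y ⟶ Z} (hp0 : i ≫ p = 0)
    (hdesc : ∀ {T : 𝒞} (t : Y ⟶ T), i ≫ t = 0 → ∃ u : Z ⟶ T, p ≫ u = t)
    (hepi : ∀ {T : 𝒞} (u u' : Z ⟶ T), p ≫ u = p ≫ u' → u = u') : E.conf i p := by
  obtain ⟨a, ha⟩ := conf_desc h p hp0
  obtain ⟨b, hb⟩ := hdesc q (E.comp_zero h)
  have hepiq : Epi q := conf_epi h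
  have hab : a ≫ b = 𝟙 W := by
    have : q ≫ (a ≫ b) = q ≫ 𝟙 W := by
      rw [← Category.assoc, ha, hb, Category.comp_id]
    exact (cancel_epi q).mp this
  have hba : b ≫ a = 𝟙 Z := by
    apply hepi
    rw [← Category.assoc, hb, ha, Category.comp_id]
  exact E.conf_iso (Iso.refl X) (Iso.refl Y) ⟨a, b, hab, hba⟩ h
    (by simp) (by simpa using ha)

/-- Replace the kernel part of a conflation by another kernel. -/
lemma conf_replace_kernel {X Y Z X' : 𝒞} {i' : X' ⟶ Y} {p : Y ⟶ Z} (h : E.conf i' p)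
    {i : X ⟶ Y} (hi0 : i ≫ p = 0)
    (hlift : ∀ {T : 𝒞} (t : T ⟶ Y), t ≫ p = 0 → ∃ u : T ⟶ X, u ≫ i = t)
    (hmono : ∀ {T : 𝒞} (u u' : T ⟶ X), u ≫ i = u' ≫ i → u = u') : E.conf i p := by
  obtain ⟨a, ha⟩ := conf_lift h i hi0
  obtain ⟨b, hb⟩ := hlift i' (E.comp_zero h)
  have hmonoi' : Mono i' := conf_mono h
  have hab : b ≫ a = 𝟙 X' := by
    have : (b ≫ a) ≫ i' = 𝟙 X' ≫ i' := by
      rw [Category.assoc, ha, hb, Category.id_comp]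
    exact (cancel_mono i').mp this
  have hba : a ≫ b = 𝟙 X := by
    apply hmono
    rw [Category.assoc, hb, ha, Category.id_comp]
  exact E.conf_iso ⟨b, a, hab, hba⟩ (Iso.refl Y) (Iso.refl Z) h
    (by simpa using hb.symm) (by simp)

lemma proj_zero : E.Proj (0 : 𝒞) := by
  intro X Y Z i p hc f
  refine ⟨0, ?_⟩
  rw [zero_comp]
  exact ((isZero_zero 𝒞).eq_of_src 0 f).symm ▸ ((isZero_zero 𝒞).eq_of_src (0 : (0:𝒞) ⟶ Z) f)

lemma proj_biprod {P Q : 𝒞} (hP : E.Proj P) (hQ : E.Proj Q) : E.Proj (P ⊞ Q) := by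
  intro X Y Z i p hc f
  obtain ⟨g₁, hg₁⟩ := hP i p hc (biprod.inl ≫ f)
  obtain ⟨g₂, hg₂⟩ := hQ i p hc (biprod.inr ≫ f)
  refine ⟨biprod.desc g₁ g₂, ?_⟩
  apply biprod.hom_ext' <;> simp [hg₁, hg₂]

variable (E) in
/-- The subgroup of morphisms factoring through a projective-injective object. -/
def projAdd (X Y : 𝒞) : AddSubgroup (X ⟶ Y) where
  carrier := {f | FactorsThruProj E f}
  zero_mem' := ⟨0, 0, 0, proj_zero, by simp⟩
  add_mem' := by
    rintro f g ⟨P, u, v, hP, hv⟩ ⟨Q, u', v', hQ, hv'⟩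
    exact ⟨P ⊞ Q, biprod.lift u u', biprod.desc v v', proj_biprod hP hQ,
      by rw [biprod.lift_desc, hv, hv']⟩
  neg_mem' := by
    rintro f ⟨P, u, v, hP, hv⟩
    exact ⟨P, u, -v, hP, by simp [hv]⟩

lemma projAdd_comp_left {W X Y : 𝒞} (a : W ⟶ X) {f : X ⟶ Y} (hf : f ∈ projAdd E X Y) :
    a ≫ f ∈ projAdd E W Y := by
  obtain ⟨P, u, v, hP, hv⟩ := hf
  exact ⟨P, a ≫ u, v, hP, by rw [Category.assoc, hv]⟩

lemma projAdd_comp_right {X Y Y' : 𝒞} {f : X ⟶ Y} (b : Y ⟶ Y') (hf : f ∈ projAdd E X Y) :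
    f ≫ b ∈ projAdd E X Y' := by
  obtain ⟨P, u, v, hP, hv⟩ := hf
  exact ⟨P, u, v ≫ b, hP, by rw [← Category.assoc, hv]⟩

variable (E) in
/-- The stable Hom group: morphisms modulo those factoring through projective-injectives. -/
abbrev SG (X Y : 𝒞) : Type v := (X ⟶ Y) ⧸ projAdd E X Y

variable (E) in
def stEquiv (X Y : 𝒞) : StHom E X Y ≃ SG E X Y where
  toFun := Quot.lift (fun f => QuotientAddGroup.mk f) (fun f g h => by
    apply (QuotientAddGroup.eq (s := projAdd E X Y)).mpr
    have hm : f - g ∈ projAdd E X Y := h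
    have h3 : -f + g = -(f - g) := by abel
    rw [h3]; exact neg_mem hm)
  invFun := fun x => Quotient.liftOn x (fun f => StHom.mk E f) (fun a b hab => by
    apply Quot.sound
    have hm : -a + b ∈ projAdd E X Y := (QuotientAddGroup.leftRel_apply).mp hab
    show (a - b) ∈ projAdd E X Y
    have h3 : a - b = -(-a + b) := by abel
    rw [h3]; exact neg_mem hm)
  left_inv := by rintro ⟨f⟩; rfl
  right_inv := by rintro ⟨f⟩; rfl

lemma cardSt (X Y : 𝒞) : Nat.card (StHom E X Y) = Nat.card (SG E X Y) :=
  Nat.card_congr (stEquiv E X Y)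

lemma stmk_eq {X Y : 𝒞} {f g : X ⟶ Y} :
    StHom.mk E f = StHom.mk E g ↔ f - g ∈ projAdd E X Y := by
  constructor
  · intro h
    have := congrArg (stEquiv E X Y) h
    have h2 : (QuotientAddGroup.mk f : SG E X Y) = QuotientAddGroup.mk g := this
    have hm := (QuotientAddGroup.eq (s := projAdd E X Y)).mp h2
    have h3 : f - g = -(-f + g) := by abel
    rw [h3]; exact neg_mem hm
  · exact fun h => Quot.sound h

def preHom {X' X : 𝒞} (a : X' ⟶ X) (Y : 𝒞) : (X ⟶ Y) →+ (X' ⟶ Y) :=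
  AddMonoidHom.mk' (fun f => a ≫ f) (fun f g => by simp)

def postHom (X : 𝒞) {Y Y' : 𝒞} (b : Y ⟶ Y') : (X ⟶ Y) →+ (X ⟶ Y') :=
  AddMonoidHom.mk' (fun f => f ≫ b) (fun f g => by simp)

variable (E) in
def SGpre {X' X : 𝒞} (a : X' ⟶ X) (Y : 𝒞) : SG E X Y →+ SG E X' Y :=
  QuotientAddGroup.map _ _ (preHom a Y) (fun f hf => projAdd_comp_left a hf)

variable (E) in
def SGpost (X : 𝒞) {Y Y' : 𝒞} (b : Y ⟶ Y') : SG E X Y →+ SG E X Y' :=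
  QuotientAddGroup.map _ _ (postHom X b) (fun f hf => projAdd_comp_right b hf)

@[simp] lemma SGpre_mk {X' X Y : 𝒞} (a : X' ⟶ X) (f : X ⟶ Y) :
    SGpre E a Y (QuotientAddGroup.mk f) = QuotientAddGroup.mk (a ≫ f) := rfl

@[simp] lemma SGpost_mk {X Y Y' : 𝒞} (b : Y ⟶ Y') (f : X ⟶ Y) :
    SGpost E X b (QuotientAddGroup.mk f) = QuotientAddGroup.mk (f ≫ b) := rfl

end Euler
set_option linter.unusedSectionVars false

namespace Euler

variable {𝒞 : Type u} [Category.{v} 𝒞] [Preadditive 𝒞] [HasZeroObject 𝒞]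
  [HasBinaryBiproducts 𝒞]
variable {E : ExactStructure 𝒞}

lemma sgmk_eq {X Y : 𝒞} {f g : X ⟶ Y} :
    (QuotientAddGroup.mk f : SG E X Y) = QuotientAddGroup.mk g ↔ f - g ∈ projAdd E X Y := by
  rw [QuotientAddGroup.eq]
  constructor
  · intro h; have h3 : f - g = -(-f + g) := by abel
    rw [h3]; exact neg_mem h
  · intro h; have h3 : -f + g = -(f - g) := by abel
    rw [h3]; exact neg_mem h

lemma sgmk_eq_zero {X Y : 𝒞} {f : X ⟶ Y} :
    (QuotientAddGroup.mk f : SG E X Y) = 0 ↔ f ∈ projAdd E X Y :=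
  QuotientAddGroup.eq_zero_iff f

section Confl

variable {X Y Z : 𝒞} {i : X ⟶ Y} {p : Y ⟶ Z}

/-- Hom-level: precomposition with a deflation is injective. -/
lemma preHom_injective (h : E.conf i p) (B : 𝒞) : Function.Injective (preHom p B) := by
  intro f g hfg
  have := conf_epi h
  exact (cancel_epi p).mp hfg

lemma ker_preHom (h : E.conf i p) (B : 𝒞) : (preHom i B).ker = (preHom p B).range := by
  ext f
  constructor
  · intro hf
    obtain ⟨g, hg⟩ := conf_desc h f hf
    exact ⟨g, hg⟩
  · rintro ⟨g, rfl⟩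
    show i ≫ p ≫ g = 0
    rw [← Category.assoc, E.comp_zero h, zero_comp]

lemma postHom_injective (h : E.conf i p) (W : 𝒞) : Function.Injective (postHom W i) := by
  intro f g hfg
  have := conf_mono h
  exact (cancel_mono i).mp hfg

lemma ker_postHom (h : E.conf i p) (W : 𝒞) : (postHom W p).ker = (postHom W i).range := by
  ext f
  constructor
  · intro hf
    obtain ⟨e, he⟩ := conf_lift h f hf
    exact ⟨e, he⟩
  · rintro ⟨e, rfl⟩
    show (e ≫ i) ≫ p = 0
    rw [Category.assoc, E.comp_zero h, comp_zero]

lemma projAdd_le_range_pre (hpi : ∀ P : 𝒞, E.Proj P → E.Inj P) (h : E.conf i p) (B : 𝒞) :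
    projAdd E X B ≤ (preHom i B).range := by
  rintro f ⟨P, u, v, hP, huv⟩
  obtain ⟨w, hw⟩ := hpi P hP i p h u
  refine ⟨w ≫ v, ?_⟩
  show i ≫ (w ≫ v) = f
  rw [← huv, ← hw, Category.assoc]

lemma projAdd_le_range_post (h : E.conf i p) (B : 𝒞) :
    projAdd E B Z ≤ (postHom B p).range := by
  rintro f ⟨Q, u, v, hQ, huv⟩
  obtain ⟨w, hw⟩ := hQ i p h v
  refine ⟨u ≫ w, ?_⟩
  show (u ≫ w) ≫ p = f
  rw [Category.assoc, hw, huv]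

/-- Stable middle exactness, contravariant. -/
lemma SG_mid_contra (hpi : ∀ P : 𝒞, E.Proj P → E.Inj P) (h : E.conf i p) (B : 𝒞) :
    (SGpre E i B).ker = (SGpre E p B).range := by
  ext x
  induction x using QuotientAddGroup.induction_on with
  | H f =>
  constructor
  · intro hf
    have hf' : i ≫ f ∈ projAdd E X B := by
      have : (QuotientAddGroup.mk (i ≫ f) : SG E X B) = 0 := hf
      exact sgmk_eq_zero.mp this
    obtain ⟨P, u, v, hP, huv⟩ := hf'
    obtain ⟨w, hw⟩ := hpi P hP i p h u
    have h0 : i ≫ (f - w ≫ v) = 0 := by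
      rw [Preadditive.comp_sub, ← Category.assoc, hw, huv, sub_self]
    obtain ⟨g, hg⟩ := conf_desc h _ h0
    refine ⟨QuotientAddGroup.mk g, ?_⟩
    rw [SGpre_mk, sgmk_eq, hg]
    exact ⟨P, w, -v, hP, by rw [Preadditive.comp_neg]; abel⟩
  · rintro ⟨y, hy⟩
    rw [← hy]
    induction y using QuotientAddGroup.induction_on with
    | H g =>
    show SGpre E i B (SGpre E p B (QuotientAddGroup.mk g)) = 0
    rw [SGpre_mk, SGpre_mk, sgmk_eq_zero]
    have : i ≫ p ≫ g = 0 := by rw [← Category.assoc, E.comp_zero h, zero_comp]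
    rw [this]; exact zero_mem _

/-- Stable middle exactness, covariant. -/
lemma SG_mid_cov (h : E.conf i p) (W : 𝒞) :
    (SGpost E W p).ker = (SGpost E W i).range := by
  ext x
  induction x using QuotientAddGroup.induction_on with
  | H f =>
  constructor
  · intro hf
    have hf' : f ≫ p ∈ projAdd E W Z := by
      have : (QuotientAddGroup.mk (f ≫ p) : SG E W Z) = 0 := hf
      exact sgmk_eq_zero.mp this
    obtain ⟨Q, u, v, hQ, huv⟩ := hf'
    obtain ⟨w, hw⟩ := hQ i p h v
    have h0 : (f - u ≫ w) ≫ p = 0 := by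
      rw [Preadditive.sub_comp, Category.assoc, hw, huv, sub_self]
    obtain ⟨e, he⟩ := conf_lift h _ h0
    refine ⟨QuotientAddGroup.mk e, ?_⟩
    rw [SGpost_mk, sgmk_eq, he]
    exact ⟨Q, u, -w, hQ, by rw [Preadditive.comp_neg]; abel⟩
  · rintro ⟨y, hy⟩
    rw [← hy]
    induction y using QuotientAddGroup.induction_on with
    | H e =>
    show SGpost E W p (SGpost E W i (QuotientAddGroup.mk e)) = 0
    rw [SGpost_mk, SGpost_mk, sgmk_eq_zero]
    have : (e ≫ i) ≫ p = 0 := by rw [Category.assoc, E.comp_zero h, comp_zero]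
    rw [this]; exact zero_mem _

end Confl

section Delta

variable {X Y Z B' IB SB : 𝒞} {i : X ⟶ Y} {p : Y ⟶ Z}
  {bi : B' ⟶ IB} {bo : IB ⟶ SB}

variable (i p bi bo) in
/-- `d` is a valid connecting value for `g`. -/
def IsD (g : SB ⟶ Z) (d : B' ⟶ X) : Prop :=
  ∃ L : IB ⟶ Y, L ≫ p = bo ≫ g ∧ d ≫ i = bi ≫ L

variable (h : E.conf i p) (hB : E.conf bi bo) (hIB : E.Proj IB)
include h hB hIB

lemma isD_exists (g : SB ⟶ Z) : ∃ d, IsD i p bi bo g d := by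
  obtain ⟨L, hL⟩ := hIB i p h (bo ≫ g)
  have h0 : (bi ≫ L) ≫ p = 0 := by
    rw [Category.assoc, hL, ← Category.assoc, E.comp_zero hB, zero_comp]
  obtain ⟨d, hd⟩ := conf_lift h _ h0
  exact ⟨d, L, hL, hd⟩

lemma isD_add {g g' : SB ⟶ Z} {d d' : B' ⟶ X}
    (h1 : IsD i p bi bo g d) (h2 : IsD i p bi bo g' d') :
    IsD i p bi bo (g + g') (d + d') := by
  obtain ⟨L, hL1, hL2⟩ := h1
  obtain ⟨M, hM1, hM2⟩ := h2
  exact ⟨L + M, by rw [Preadditive.add_comp, Preadditive.comp_add, hL1, hM1],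
    by rw [Preadditive.add_comp, Preadditive.comp_add, hL2, hM2]⟩

lemma isD_unique {g : SB ⟶ Z} {d d' : B' ⟶ X}
    (h1 : IsD i p bi bo g d) (h2 : IsD i p bi bo g d') :
    d - d' ∈ projAdd E B' X := by
  obtain ⟨L, hL1, hL2⟩ := h1
  obtain ⟨M, hM1, hM2⟩ := h2
  have h0 : (L - M) ≫ p = 0 := by rw [Preadditive.sub_comp, hL1, hM1, sub_self]
  obtain ⟨m, hm⟩ := conf_lift h _ h0
  have hmono := conf_mono h
  have : (d - d') ≫ i = (bi ≫ m) ≫ i := by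
    rw [Preadditive.sub_comp, hL2, hM2, Category.assoc, hm, Preadditive.comp_sub]
  have hdd : d - d' = bi ≫ m := (cancel_mono i).mp this
  exact ⟨IB, bi, m, hIB, hdd.symm⟩

lemma isD_zero {g : SB ⟶ Z} {d : B' ⟶ X} (h1 : IsD i p bi bo g d)
    (hg : g ∈ projAdd E SB Z) : d ∈ projAdd E B' X := by
  obtain ⟨Q, u, v, hQ, huv⟩ := hg
  obtain ⟨w, hw⟩ := hQ i p h v
  have h2 : IsD i p bi bo g 0 := by
    refine ⟨bo ≫ u ≫ w, ?_, ?_⟩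
    · rw [Category.assoc, Category.assoc, hw, huv]
    · rw [zero_comp, ← Category.assoc, ← Category.assoc, E.comp_zero hB, zero_comp, zero_comp]
  have := isD_unique h hB hIB h1 h2
  simpa using this

noncomputable def delta0 : (SB ⟶ Z) →+ SG E B' X :=
  AddMonoidHom.mk' (fun g => QuotientAddGroup.mk
      (Classical.choose (isD_exists h hB hIB g)))
    (fun g g' => by
      have hd := Classical.choose_spec (isD_exists h hB hIB g)
      have hd' := Classical.choose_spec (isD_exists h hB hIB g')
      have hdd := Classical.choose_spec (isD_exists h hB hIB (g + g'))
      have hsum := isD_add h hB hIB hd hd'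
      have := isD_unique h hB hIB hdd hsum
      show _ = QuotientAddGroup.mk (_ + _)
      rw [sgmk_eq]
      exact this)

noncomputable def delta : SG E SB Z →+ SG E B' X :=
  QuotientAddGroup.lift (projAdd E SB Z) (delta0 h hB hIB) (fun g hg => by
    have hd := Classical.choose_spec (isD_exists h hB hIB g)
    exact sgmk_eq_zero.mpr (isD_zero h hB hIB hd hg))

lemma delta_mk {g : SB ⟶ Z} {d : B' ⟶ X} (hd : IsD i p bi bo g d) :
    delta h hB hIB (QuotientAddGroup.mk g) = QuotientAddGroup.mk d := by
  have hd0 := Classical.choose_spec (isD_exists h hB hIB g)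
  show QuotientAddGroup.mk _ = _
  rw [sgmk_eq]
  exact isD_unique h hB hIB hd0 hd

/-- Exactness at `SG(B', X)`. -/
lemma ker_SGpost_eq_range_delta (hpi : ∀ P : 𝒞, E.Proj P → E.Inj P) :
    (SGpost E B' i).ker = (delta h hB hIB).range := by
  ext x
  induction x using QuotientAddGroup.induction_on with
  | H f =>
  constructor
  · intro hf
    have hf' : f ≫ i ∈ projAdd E B' Y := sgmk_eq_zero.mp hf
    obtain ⟨Q, u, v, hQ, huv⟩ := hf'
    obtain ⟨ub, hub⟩ := hpi Q hQ bi bo hB u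
    set L : IB ⟶ Y := ub ≫ v with hL
    have hbiL : bi ≫ L = f ≫ i := by rw [hL, ← Category.assoc, hub, huv]
    have h0 : bi ≫ (L ≫ p) = 0 := by
      rw [← Category.assoc, hbiL, Category.assoc, E.comp_zero h, comp_zero]
    obtain ⟨g, hg⟩ := conf_desc hB _ h0
    refine ⟨QuotientAddGroup.mk g, ?_⟩
    exact delta_mk h hB hIB ⟨L, hg.symm, hbiL.symm⟩
  · rintro ⟨y, hy⟩
    rw [← hy]
    induction y using QuotientAddGroup.induction_on with
    | H g =>
    obtain ⟨d, hd⟩ := isD_exists h hB hIB g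
    rw [delta_mk h hB hIB hd]
    show (QuotientAddGroup.mk (d ≫ i) : SG E B' Y) = 0
    obtain ⟨L, _, hL2⟩ := hd
    rw [sgmk_eq_zero, hL2]
    exact ⟨IB, bi, L, hIB, rfl⟩

/-- Exactness at `SG(SB, Z)`. -/
lemma ker_delta_eq_range_SGpost (hpi : ∀ P : 𝒞, E.Proj P → E.Inj P) :
    (delta h hB hIB).ker = (SGpost E SB p).range := by
  ext x
  induction x using QuotientAddGroup.induction_on with
  | H g =>
  constructor
  · intro hg
    obtain ⟨d, hd⟩ := isD_exists h hB hIB g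
    have hd0 : d ∈ projAdd E B' X := by
      have hg0 : delta h hB hIB (QuotientAddGroup.mk g) = 0 := hg
      rw [delta_mk h hB hIB hd] at hg0
      exact sgmk_eq_zero.mp hg0
    obtain ⟨Q, u, v, hQ, huv⟩ := hd0
    obtain ⟨ub, hub⟩ := hpi Q hQ bi bo hB u
    obtain ⟨L, hL1, hL2⟩ := hd
    have h0 : bi ≫ (L - ub ≫ (v ≫ i)) = 0 := by
      rw [Preadditive.comp_sub, ← Category.assoc, ← Category.assoc, hub, huv, ← hL2]
      simp
    obtain ⟨hh, hhh⟩ := conf_desc hB _ h0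
    refine ⟨QuotientAddGroup.mk hh, ?_⟩
    rw [SGpost_mk]
    congr 1
    have hepi := conf_epi hB
    apply (cancel_epi bo).mp
    rw [← Category.assoc, hhh, Preadditive.sub_comp, hL1]
    have h00 : i ≫ p = 0 := E.comp_zero h
    simp [h00]
  · rintro ⟨y, hy⟩
    rw [← hy]
    induction y using QuotientAddGroup.induction_on with
    | H hh =>
    show delta h hB hIB (SGpost E SB p (QuotientAddGroup.mk hh)) = 0
    rw [SGpost_mk]
    have hd : IsD i p bi bo (hh ≫ p) 0 := by
      refine ⟨bo ≫ hh, by rw [Category.assoc], ?_⟩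
      rw [zero_comp, ← Category.assoc, E.comp_zero hB, zero_comp]
    rw [delta_mk h hB hIB hd]
    exact sgmk_eq_zero.mpr (zero_mem _)

end Delta

end Euler
namespace Euler

variable {𝒞 : Type u} [Category.{v} 𝒞] [Preadditive 𝒞] [HasZeroObject 𝒞]
  [HasBinaryBiproducts 𝒞]
variable {E : ExactStructure 𝒞}

lemma stIso_def {X Y : 𝒞} :
    StIso E X Y ↔ ∃ (f : X ⟶ Y) (g : Y ⟶ X),
      f ≫ g - 𝟙 X ∈ projAdd E X X ∧ g ≫ f - 𝟙 Y ∈ projAdd E Y Y := by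
  unfold StIso
  simp only [stmk_eq]

lemma stiso_refl (X : 𝒞) : StIso E X X :=
  stIso_def.mpr ⟨𝟙 X, 𝟙 X, by rw [Category.comp_id, sub_self]; exact zero_mem _,
    by rw [Category.comp_id, sub_self]; exact zero_mem _⟩

lemma stiso_symm {X Y : 𝒞} (h : StIso E X Y) : StIso E Y X := by
  obtain ⟨f, g, h1, h2⟩ := h
  exact ⟨g, f, h2, h1⟩

lemma stiso_trans {X Y Z : 𝒞} (h : StIso E X Y) (h' : StIso E Y Z) : StIso E X Z := by
  rw [stIso_def] at *
  obtain ⟨f, g, h1, h2⟩ := h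
  obtain ⟨f', g', h1', h2'⟩ := h'
  refine ⟨f ≫ f', g' ≫ g, ?_, ?_⟩
  · have key : (f ≫ f') ≫ (g' ≫ g) - 𝟙 X
        = f ≫ (f' ≫ g' - 𝟙 Y) ≫ g + (f ≫ g - 𝟙 X) := by
      simp only [Preadditive.comp_sub, Preadditive.sub_comp, Category.id_comp,
        Category.comp_id, Category.assoc]
      abel
    rw [key]
    exact add_mem (projAdd_comp_left f (projAdd_comp_right g h1')) h1
  · have key : (g' ≫ g) ≫ (f ≫ f') - 𝟙 Z
        = g' ≫ (g ≫ f - 𝟙 Y) ≫ f' + (g' ≫ f' - 𝟙 Z) := by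
      simp only [Preadditive.comp_sub, Preadditive.sub_comp, Category.id_comp,
        Category.comp_id, Category.assoc]
      abel
    rw [key]
    exact add_mem (projAdd_comp_left g' (projAdd_comp_right f' h2)) h2'

/-- Stably isomorphic objects have the same stable Hom cardinalities (first variable). -/
lemma card_st_contra {X X' : 𝒞} (hst : StIso E X X') (B : 𝒞) :
    Nat.card (StHom E X B) = Nat.card (StHom E X' B) := by
  rw [cardSt, cardSt]
  obtain ⟨f, g, h1, h2⟩ := stIso_def.mp hst
  refine Nat.card_congr (Equiv.symm ⟨fun x => SGpre E f B x, fun x => SGpre E g B x, ?_, ?_⟩)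
  · intro x
    induction x using QuotientAddGroup.induction_on with
    | H k =>
    show (QuotientAddGroup.mk (g ≫ f ≫ k) : SG E X' B) = QuotientAddGroup.mk k
    rw [sgmk_eq]
    have : g ≫ f ≫ k - k = (g ≫ f - 𝟙 X') ≫ k := by
      simp [Preadditive.sub_comp]
    rw [this]
    exact projAdd_comp_right k h2
  · intro x
    induction x using QuotientAddGroup.induction_on with
    | H k =>
    show (QuotientAddGroup.mk (f ≫ g ≫ k) : SG E X B) = QuotientAddGroup.mk k
    rw [sgmk_eq]
    have : f ≫ g ≫ k - k = (f ≫ g - 𝟙 X) ≫ k := by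
      simp [Preadditive.sub_comp]
    rw [this]
    exact projAdd_comp_right k h1

/-- Stably isomorphic objects have the same stable Hom cardinalities (second variable). -/
lemma card_st_cov {Y Y' : 𝒞} (hst : StIso E Y Y') (B : 𝒞) :
    Nat.card (StHom E B Y) = Nat.card (StHom E B Y') := by
  rw [cardSt, cardSt]
  obtain ⟨f, g, h1, h2⟩ := stIso_def.mp hst
  refine Nat.card_congr ⟨fun x => SGpost E B f x, fun x => SGpost E B g x, ?_, ?_⟩
  · intro x
    induction x using QuotientAddGroup.induction_on with
    | H k =>
    show (QuotientAddGroup.mk ((k ≫ f) ≫ g) : SG E B Y) = QuotientAddGroup.mk k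
    rw [sgmk_eq]
    have : (k ≫ f) ≫ g - k = k ≫ (f ≫ g - 𝟙 Y) := by
      simp [Preadditive.comp_sub]
    rw [this]
    exact projAdd_comp_left k h1
  · intro x
    induction x using QuotientAddGroup.induction_on with
    | H k =>
    show (QuotientAddGroup.mk ((k ≫ g) ≫ f) : SG E B Y') = QuotientAddGroup.mk k
    rw [sgmk_eq]
    have : (k ≫ g) ≫ f - k = k ≫ (g ≫ f - 𝟙 Y') := by
      simp [Preadditive.comp_sub]
    rw [this]
    exact projAdd_comp_left k h2

section SCong

variable (Sd : SuspData E) (hpi : ∀ P : 𝒞, E.Proj P → E.Inj P)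
include hpi

/-- Half of the suspension congruence computation. -/
lemma stiso_S_half {X X' : 𝒞} {f : X ⟶ X'} {g : X' ⟶ X}
    (hfg : f ≫ g - 𝟙 X ∈ projAdd E X X)
    {φ : Sd.I X ⟶ Sd.I X'} (hφ : Sd.ins X ≫ φ = f ≫ Sd.ins X')
    {ψ : Sd.I X' ⟶ Sd.I X} (hψ : Sd.ins X' ≫ ψ = g ≫ Sd.ins X)
    {Φ : Sd.S X ⟶ Sd.S X'} (hΦ : Sd.out X ≫ Φ = φ ≫ Sd.out X')
    {Ψ : Sd.S X' ⟶ Sd.S X} (hΨ : Sd.out X' ≫ Ψ = ψ ≫ Sd.out X) :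
    Φ ≫ Ψ - 𝟙 (Sd.S X) ∈ projAdd E (Sd.S X) (Sd.S X) := by
  obtain ⟨Q, a, b, hQ, hab⟩ := hfg
  obtain ⟨α, hα⟩ := hpi Q hQ (Sd.ins X) (Sd.out X) (Sd.isConf X) a
  have hθ : Sd.ins X ≫ (φ ≫ ψ) = Sd.ins X + a ≫ b ≫ Sd.ins X := by
    rw [← Category.assoc, hφ, Category.assoc, hψ, ← Category.assoc, ← Category.assoc]
    have : f ≫ g = 𝟙 X + a ≫ b := by rw [hab]; abel
    rw [this]
    simp [Preadditive.add_comp]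
  have h0 : Sd.ins X ≫ (φ ≫ ψ - 𝟙 (Sd.I X) - α ≫ (b ≫ Sd.ins X)) = 0 := by
    rw [Preadditive.comp_sub, Preadditive.comp_sub, hθ, Category.comp_id]
    simp only [← Category.assoc]
    rw [hα]
    abel
  obtain ⟨lam, hlam⟩ := conf_desc (Sd.isConf X) _ h0
  have hout : Sd.out X ≫ (Φ ≫ Ψ - 𝟙 (Sd.S X) - lam ≫ Sd.out X) = 0 := by
    have h1 : Sd.out X ≫ Φ ≫ Ψ = (φ ≫ ψ) ≫ Sd.out X := by
      rw [← Category.assoc, hΦ, Category.assoc, hΨ, ← Category.assoc, Category.assoc]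
    have h2 : φ ≫ ψ = 𝟙 (Sd.I X) + α ≫ (b ≫ Sd.ins X) + Sd.out X ≫ lam := by
      rw [hlam]; abel
    simp only [Preadditive.comp_sub, h1, h2, Preadditive.add_comp]
    have h3 : (α ≫ (b ≫ Sd.ins X)) ≫ Sd.out X = 0 := by
      rw [Category.assoc, Category.assoc, E.comp_zero (Sd.isConf X)]
      simp
    rw [h3]
    simp [Category.assoc]
  have hepi := conf_epi (Sd.isConf X)
  have : Sd.out X ≫ (Φ ≫ Ψ - 𝟙 (Sd.S X) - lam ≫ Sd.out X) = Sd.out X ≫ 0 := by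
    simpa using hout
  have key : Φ ≫ Ψ - 𝟙 (Sd.S X) - lam ≫ Sd.out X = 0 := (cancel_epi (Sd.out X)).mp this
  have : Φ ≫ Ψ - 𝟙 (Sd.S X) = lam ≫ Sd.out X := by
    rw [← sub_eq_zero]; exact key
  rw [this]
  exact ⟨Sd.I X, lam, Sd.out X, Sd.proj X, rfl⟩

/-- Suspension preserves stable isomorphism. -/
lemma stiso_S {X X' : 𝒞} (hst : StIso E X X') : StIso E (Sd.S X) (Sd.S X') := by
  obtain ⟨f, g, h1, h2⟩ := stIso_def.mp hst
  obtain ⟨φ, hφ⟩ := hpi (Sd.I X') (Sd.proj X') (Sd.ins X) (Sd.out X) (Sd.isConf X)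
    (f ≫ Sd.ins X')
  obtain ⟨ψ, hψ⟩ := hpi (Sd.I X) (Sd.proj X) (Sd.ins X') (Sd.out X') (Sd.isConf X')
    (g ≫ Sd.ins X)
  have hΦ0 : Sd.ins X ≫ (φ ≫ Sd.out X') = 0 := by
    rw [← Category.assoc, hφ, Category.assoc, E.comp_zero (Sd.isConf X'), comp_zero]
  obtain ⟨Φ, hΦ⟩ := conf_desc (Sd.isConf X) _ hΦ0
  have hΨ0 : Sd.ins X' ≫ (ψ ≫ Sd.out X) = 0 := by
    rw [← Category.assoc, hψ, Category.assoc, E.comp_zero (Sd.isConf X), comp_zero]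
  obtain ⟨Ψ, hΨ⟩ := conf_desc (Sd.isConf X') _ hΨ0
  refine stIso_def.mpr ⟨Φ, Ψ, ?_, ?_⟩
  · exact stiso_S_half Sd hpi h1 hφ hψ hΦ hΨ
  · exact stiso_S_half Sd hpi h2 hψ hφ hΨ hΦ

/-- The rotation of a conflation `X ↣ Y ↠ Z`: a conflation `Y ↣ C ↠ ΣX`
where `C` is stably isomorphic to `Z` via a compatible deflation. -/
lemma rot_exists {X Y Z : 𝒞} {i : X ⟶ Y} {p : Y ⟶ Z} (h : E.conf i p) :
    ∃ (C : 𝒞) (i1 : Y ⟶ C) (r : C ⟶ Sd.S X) (pb : C ⟶ Z) (s : Z ⟶ C),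
      E.conf i1 r ∧ i1 ≫ pb = p ∧ s ≫ pb = 𝟙 Z ∧ 𝟙 C - pb ≫ s ∈ projAdd E C C := by
  obtain ⟨C, i1, g1, hpo, W1, q1, hconf1⟩ := E.pushout_infl (Sd.isConf X) i
  obtain ⟨C₂, i2, g2, hpo2, W2, q2, hconf2⟩ := E.pushout_infl h (Sd.ins X)
  -- comparison isomorphism
  have hw : Sd.ins X ≫ g1 = i ≫ i1 := hpo.w
  have hw2 : i ≫ g2 = Sd.ins X ≫ i2 := hpo2.w
  let e2 : C₂ ⟶ C := hpo2.desc i1 g1 hw.symm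
  let e2' : C ⟶ C₂ := hpo.desc i2 g2 hw2.symm
  have he_a : g2 ≫ e2 = i1 := hpo2.inl_desc _ _ _
  have he_b : i2 ≫ e2 = g1 := hpo2.inr_desc _ _ _
  have he_c : g1 ≫ e2' = i2 := hpo.inl_desc _ _ _
  have he_d : i1 ≫ e2' = g2 := hpo.inr_desc _ _ _
  have he1 : e2 ≫ e2' = 𝟙 C₂ := by
    apply hpo2.hom_ext
    · rw [← Category.assoc, he_a, he_d, Category.comp_id]
    · rw [← Category.assoc, he_b, he_c, Category.comp_id]
  have he2 : e2' ≫ e2 = 𝟙 C := by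
    apply hpo.hom_ext
    · rw [← Category.assoc, he_c, he_b, Category.comp_id]
    · rw [← Category.assoc, he_d, he_a, Category.comp_id]
  -- conflation (g1, e2' ≫ q2)
  have hconfg1 : E.conf g1 (e2' ≫ q2) := by
    refine E.conf_iso (Iso.refl (Sd.I X)) ⟨e2, e2', he1, he2⟩ (Iso.refl W2) hconf2 ?_ ?_
    · simpa using he_b
    · show q2 ≫ 𝟙 W2 = e2 ≫ e2' ≫ q2
      rw [Category.comp_id, ← Category.assoc, he1, Category.id_comp]
  -- the deflation pb : C ⟶ Z
  have hdescpb : Sd.ins X ≫ (0 : Sd.I X ⟶ Z) = i ≫ p := by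
    rw [comp_zero, E.comp_zero h]
  let pb : C ⟶ Z := hpo.desc 0 p hdescpb
  have hg1pb : g1 ≫ pb = 0 := hpo.inl_desc _ _ _
  have hi1pb : i1 ≫ pb = p := hpo.inr_desc _ _ _
  -- pb is a cokernel of g1
  have hconfpb : E.conf g1 pb := by
    refine conf_replace_cokernel hconfg1 hg1pb ?_ ?_
    · intro T t ht
      have h1 : i ≫ (i1 ≫ t) = 0 := by
        rw [← Category.assoc, ← hw, Category.assoc, ht, comp_zero]
      obtain ⟨u, hu⟩ := conf_desc h _ h1
      refine ⟨u, ?_⟩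
      apply hpo.hom_ext
      · rw [← Category.assoc, hg1pb, zero_comp, ht]
      · rw [← Category.assoc, hi1pb, hu]
    · intro T u u' huu
      haveI := conf_epi h
      have : p ≫ u = p ≫ u' := by
        rw [← hi1pb, Category.assoc, Category.assoc, huu]
      exact (cancel_epi p).mp this
  -- the deflation r : C ⟶ S X
  have hdescr : Sd.ins X ≫ Sd.out X = i ≫ (0 : Y ⟶ Sd.S X) := by
    rw [comp_zero, E.comp_zero (Sd.isConf X)]
  let r : C ⟶ Sd.S X := hpo.desc (Sd.out X) 0 hdescr
  have hg1r : g1 ≫ r = Sd.out X := hpo.inl_desc _ _ _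
  have hi1r : i1 ≫ r = 0 := hpo.inr_desc _ _ _
  have hconfr : E.conf i1 r := by
    refine conf_replace_cokernel hconf1 hi1r ?_ ?_
    · intro T t ht
      have h1 : Sd.ins X ≫ (g1 ≫ t) = 0 := by
        rw [← Category.assoc, hw, Category.assoc, ht, comp_zero]
      obtain ⟨u, hu⟩ := conf_desc (Sd.isConf X) _ h1
      refine ⟨u, ?_⟩
      apply hpo.hom_ext
      · rw [← Category.assoc, hg1r, hu]
      · rw [← Category.assoc, hi1r, zero_comp, ht]
    · intro T u u' huu
      haveI := conf_epi (Sd.isConf X)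
      have : Sd.out X ≫ u = Sd.out X ≫ u' := by
        rw [← hg1r, Category.assoc, Category.assoc, huu]
      exact (cancel_epi (Sd.out X)).mp this
  -- a section of pb, stably inverse
  obtain ⟨rr, hrr⟩ := hpi (Sd.I X) (Sd.proj X) g1 pb hconfpb (𝟙 (Sd.I X))
  have hs0 : g1 ≫ (𝟙 C - rr ≫ g1) = 0 := by
    rw [Preadditive.comp_sub, Category.comp_id, ← Category.assoc, hrr, Category.id_comp,
      sub_self]
  obtain ⟨s, hs⟩ := conf_desc hconfpb _ hs0
  have hspb : s ≫ pb = 𝟙 Z := by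
    haveI := conf_epi hconfpb
    apply (cancel_epi pb).mp
    rw [← Category.assoc, hs, Preadditive.sub_comp, Category.id_comp, Category.assoc,
      hg1pb, comp_zero, sub_zero, Category.comp_id]
  refine ⟨C, i1, r, pb, s, hconfr, hi1pb, hspb, ?_⟩
  have : 𝟙 C - pb ≫ s = rr ≫ g1 := by
    rw [hs, sub_sub_cancel]
  rw [this]
  exact ⟨Sd.I X, rr, g1, Sd.proj X, rfl⟩

end SCong

end Euler
namespace Euler
set_option linter.unusedTactic false

lemma card_ker_mul_card_range {G H : Type w} [AddCommGroup G] [AddCommGroup H] [Finite G] (f : G →+ H) :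
    Nat.card f.ker * Nat.card f.range = Nat.card G := by
  have h1 := AddSubgroup.card_eq_card_quotient_mul_card_addSubgroup f.ker
  have h2 : Nat.card (G ⧸ f.ker) = Nat.card f.range :=
    Nat.card_congr (QuotientAddGroup.quotientKerEquivRange f).toEquiv
  rw [h1, h2]; ring

lemma prod_sign_ne_zero {S : ℕ → ℕ} (hS : ∀ m, S m ≠ 0) (n : ℕ) :
    ∏ m ∈ Finset.range n, ((S m : ℚ) ^ ((-1 : ℤ) ^ m)) ≠ 0 := by
  apply Finset.prod_ne_zero_iff.mpr
  intro m _
  apply zpow_ne_zero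
  exact_mod_cast hS m

lemma hpeel (N : ℕ) (S : ℕ → ℕ) :
    ∏ m ∈ Finset.range (N + 1), ((S m : ℚ) ^ ((-1 : ℤ) ^ m))
    = (S 0 : ℚ) * (∏ m ∈ Finset.range N, ((S (m + 1) : ℚ) ^ ((-1 : ℤ) ^ m)))⁻¹ := by
  rw [Finset.prod_range_succ' (fun m => ((S m : ℚ) ^ ((-1 : ℤ) ^ m))) N]
  have h : ∀ m, ((S (m + 1) : ℚ) ^ ((-1 : ℤ) ^ (m + 1))) = ((S (m + 1) : ℚ) ^ ((-1 : ℤ) ^ m))⁻¹ := by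
    intro m
    rw [pow_succ, mul_neg_one, zpow_neg]
  rw [Finset.prod_congr rfl (fun m _ => h m), Finset.prod_inv_distrib, pow_zero, zpow_one]
  ring

lemma card_range_of_injective {G H : Type w} [AddCommGroup G] [AddCommGroup H]
    (f : G →+ H) (hf : Function.Injective f) :
    Nat.card f.range = Nat.card G :=
  Nat.card_congr (AddMonoidHom.ofInjective hf).symm.toEquiv

/-- The cardinality of the range of a map induced on quotient groups. -/
lemma card_range_quotmap {G H : Type w} [AddCommGroup G] [AddCommGroup H] [Finite H]
    (f : G →+ H) (P : AddSubgroup G) (Q : AddSubgroup H)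
    (hmap : P ≤ Q.comap f) (hQ : Q ≤ f.range) :
    Nat.card (QuotientAddGroup.map P Q f hmap).range * Nat.card Q = Nat.card f.range := by
  have hr : (QuotientAddGroup.map P Q f hmap).range
      = AddSubgroup.map (QuotientAddGroup.mk' Q) f.range := by
    ext y
    induction y using QuotientAddGroup.induction_on with
    | H h =>
    constructor
    · rintro ⟨x, hx⟩
      induction x using QuotientAddGroup.induction_on with
      | H g =>
      rw [QuotientAddGroup.map_mk] at hx
      exact ⟨f g, ⟨g, rfl⟩, hx⟩
    · rintro ⟨z, ⟨g, rfl⟩, hz⟩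
      exact ⟨QuotientAddGroup.mk g, by rw [QuotientAddGroup.map_mk]; exact hz⟩
  set ρ : f.range →+ H ⧸ Q := (QuotientAddGroup.mk' Q).comp f.range.subtype with hρ
  have hrange : ρ.range = AddSubgroup.map (QuotientAddGroup.mk' Q) f.range := by
    rw [hρ, AddMonoidHom.range_comp, AddSubgroup.range_subtype]
  have hker : ρ.ker = Q.addSubgroupOf f.range := by
    ext x
    simp [hρ, AddSubgroup.mem_addSubgroupOf, QuotientAddGroup.eq_zero_iff]
  have h1 := card_ker_mul_card_range ρ
  rw [hker, hrange] at h1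
  have h2 : Nat.card (Q.addSubgroupOf f.range) = Nat.card Q :=
    Nat.card_congr (AddSubgroup.addSubgroupOfEquivOfLe hQ).toEquiv
  rw [hr, ← h1, h2]
  ring

lemma blockALT {G₁ G₂ G₃ : ℕ → Type w}
    [∀ n, AddCommGroup (G₁ n)] [∀ n, AddCommGroup (G₂ n)] [∀ n, AddCommGroup (G₃ n)]
    [∀ n, Finite (G₁ n)] [∀ n, Finite (G₂ n)] [∀ n, Finite (G₃ n)]
    (u : ∀ m, G₂ m →+ G₁ m) (v : ∀ m, G₃ m →+ G₂ m) (w : ∀ m, G₁ (m + 1) →+ G₃ m)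
    (hv : ∀ m, (v m).range = (u m).ker)
    (hw : ∀ m, (w m).range = (v m).ker)
    (hu : ∀ m, (u (m + 1)).range = (w m).ker)
    (N : ℕ) (htop : Nat.card (G₁ (N + 1)) = 1) :
    (∏ m ∈ Finset.range (N + 1), (Nat.card (G₁ m) : ℚ) ^ ((-1 : ℤ) ^ m)) *
      (∏ m ∈ Finset.range (N + 1), (Nat.card (G₃ m) : ℚ) ^ ((-1 : ℤ) ^ m)) *
      (Nat.card (u 0).range : ℚ)
    = (Nat.card (G₁ 0) : ℚ) *
      ∏ m ∈ Finset.range (N + 1), (Nat.card (G₂ m) : ℚ) ^ ((-1 : ℤ) ^ m) := by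
  induction N generalizing G₁ G₂ G₃ with
  | zero =>
    rw [Finset.prod_range_one, Finset.prod_range_one, Finset.prod_range_one]
    simp only [pow_zero, zpow_one]
    have hw0 : Nat.card (w 0).range = 1 := by
      have hdvd : Nat.card (w 0).range ∣ Nat.card (G₁ (0 + 1)) :=
        ⟨Nat.card (w 0).ker, by rw [← card_ker_mul_card_range (w 0)]; ring⟩
      rw [htop] at hdvd
      exact Nat.eq_one_of_dvd_one hdvd
    have hkerv : Nat.card (v 0).ker = 1 := by rw [← hw 0]; exact hw0
    have h3 : Nat.card (G₃ 0) = Nat.card (v 0).range := by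
      rw [← card_ker_mul_card_range (v 0), hkerv, one_mul]
    have h2 : (Nat.card (G₂ 0) : ℚ) = (Nat.card (v 0).range : ℚ) * (Nat.card (u 0).range : ℚ) := by
      rw [← card_ker_mul_card_range (u 0), ← hv 0]
      push_cast; ring
    rw [h3, h2]
    push_cast; ring
  | succ N ih =>
    have IH := ih (G₁ := fun m => G₁ (m + 1)) (G₂ := fun m => G₂ (m + 1))
      (G₃ := fun m => G₃ (m + 1)) (fun m => u (m + 1)) (fun m => v (m + 1))
      (fun m => w (m + 1)) (fun m => hv (m + 1)) (fun m => hw (m + 1))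
      (fun m => hu (m + 1)) htop
    have h2 : (Nat.card (G₂ 0) : ℚ) = (Nat.card (v 0).range : ℚ) * (Nat.card (u 0).range : ℚ) := by
      rw [← card_ker_mul_card_range (u 0), ← hv 0]; push_cast; ring
    have h3 : (Nat.card (G₃ 0) : ℚ) = (Nat.card (w 0).range : ℚ) * (Nat.card (v 0).range : ℚ) := by
      rw [← card_ker_mul_card_range (v 0), ← hw 0]; push_cast; ring
    have h11 : (Nat.card (G₁ 1) : ℚ) = (Nat.card (u 1).range : ℚ) * (Nat.card (w 0).range : ℚ) := by
      rw [← card_ker_mul_card_range (w 0), ← hu 0]; push_cast; ring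
    have IH2 : (∏ m ∈ Finset.range (N + 1), (Nat.card (G₁ (m + 1)) : ℚ) ^ ((-1 : ℤ) ^ m)) *
          (∏ m ∈ Finset.range (N + 1), (Nat.card (G₃ (m + 1)) : ℚ) ^ ((-1 : ℤ) ^ m)) *
          (Nat.card (u 1).range : ℚ)
        = (Nat.card (G₁ 1) : ℚ) *
          ∏ m ∈ Finset.range (N + 1), (Nat.card (G₂ (m + 1)) : ℚ) ^ ((-1 : ℤ) ^ m) := IH
    have c1 : ∀ (X : ℕ → Type w) [∀ n, AddCommGroup (X n)] [∀ n, Finite (X n)] (m : ℕ),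
        Nat.card (X m) ≠ 0 := by
      intro X _ _ m
      haveI : Nonempty (X m) := ⟨0⟩
      exact Nat.card_ne_zero.mpr ⟨this, inferInstance⟩
    have hP1 : (∏ m ∈ Finset.range (N + 1), (Nat.card (G₁ (m + 1)) : ℚ) ^ ((-1 : ℤ) ^ m)) ≠ 0 :=
      prod_sign_ne_zero (fun m => c1 G₁ (m + 1)) _
    have hP2 : (∏ m ∈ Finset.range (N + 1), (Nat.card (G₂ (m + 1)) : ℚ) ^ ((-1 : ℤ) ^ m)) ≠ 0 :=
      prod_sign_ne_zero (fun m => c1 G₂ (m + 1)) _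
    have hP3 : (∏ m ∈ Finset.range (N + 1), (Nat.card (G₃ (m + 1)) : ℚ) ^ ((-1 : ℤ) ^ m)) ≠ 0 :=
      prod_sign_ne_zero (fun m => c1 G₃ (m + 1)) _
    have hK' : (Nat.card (u 1).range : ℚ) ≠ 0 := by
      haveI h0 : Nonempty ((u 1).range) := ⟨0⟩
      have : Nat.card (u 1).range ≠ 0 := Nat.card_ne_zero.mpr ⟨h0, inferInstance⟩
      exact_mod_cast this
    rw [h11] at IH2
    rw [hpeel (N + 1) (fun m => Nat.card (G₁ m)), hpeel (N + 1) (fun m => Nat.card (G₂ m)),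
      hpeel (N + 1) (fun m => Nat.card (G₃ m)), h2, h3]
    set a := (Nat.card (G₁ 0) : ℚ) with ha
    set b := (Nat.card (w 0).range : ℚ) with hb
    set c := (Nat.card (v 0).range : ℚ) with hc
    set K := (Nat.card (u 0).range : ℚ) with hK
    set K' := (Nat.card (u 1).range : ℚ) with hKp
    set P1 := ∏ m ∈ Finset.range (N + 1), (Nat.card (G₁ (m + 1)) : ℚ) ^ ((-1 : ℤ) ^ m) with hP1d
    set P2 := ∏ m ∈ Finset.range (N + 1), (Nat.card (G₂ (m + 1)) : ℚ) ^ ((-1 : ℤ) ^ m) with hP2d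
    set P3 := ∏ m ∈ Finset.range (N + 1), (Nat.card (G₃ (m + 1)) : ℚ) ^ ((-1 : ℤ) ^ m) with hP3d
    field_simp
    apply mul_right_cancel₀ hK'
    linear_combination (-(a * c * K)) * IH2

end Euler
namespace Euler

variable {𝒞 : Type u} [Category.{v} 𝒞] [Preadditive 𝒞] [HasZeroObject 𝒞]
  [HasBinaryBiproducts 𝒞]
variable {E : ExactStructure 𝒞}

/-- A bundled conflation. -/
structure Confl (E : ExactStructure 𝒞) where
  X : 𝒞
  Y : 𝒞
  Z : 𝒞
  i : X ⟶ Y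
  p : Y ⟶ Z
  hconf : E.conf i p

/-- A bundled rotation of a conflation. -/
structure Rot (Sd : SuspData E) (c : Confl E) where
  C : 𝒞
  i1 : c.Y ⟶ C
  r : C ⟶ Sd.S c.X
  pb : C ⟶ c.Z
  s : c.Z ⟶ C
  hconf : E.conf i1 r
  hcomp : i1 ≫ pb = c.p
  hs : s ≫ pb = 𝟙 c.Z
  hproj : 𝟙 C - pb ≫ s ∈ projAdd E C C

section Chain

variable (Sd : SuspData E) (hpi : ∀ P : 𝒞, E.Proj P → E.Inj P)
include hpi

lemma rot_nonempty (c : Confl E) : Nonempty (Rot Sd c) := by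
  obtain ⟨C, i1, r, pb, s, h1, h2, h3, h4⟩ := rot_exists Sd hpi c.hconf
  exact ⟨⟨C, i1, r, pb, s, h1, h2, h3, h4⟩⟩

noncomputable def rotP (c : Confl E) : Rot Sd c := Classical.choice (rot_nonempty Sd hpi c)

noncomputable def chain (c0 : Confl E) : ℕ → Confl E
  | 0 => c0
  | n + 1 =>
    let c := chain c0 n
    let R := rotP Sd hpi c
    ⟨c.Y, R.C, Sd.S c.X, R.i1, R.r, R.hconf⟩

omit hpi in
lemma rot_stiso {c : Confl E} (R : Rot Sd c) : StIso E R.C c.Z := by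
  refine stIso_def.mpr ⟨R.pb, R.s, ?_, ?_⟩
  · have h3 : R.pb ≫ R.s - 𝟙 R.C = -(𝟙 R.C - R.pb ≫ R.s) := by abel
    rw [h3]
    exact neg_mem R.hproj
  · rw [R.hs, sub_self]
    exact zero_mem _

omit hpi in
lemma SGpre_section_surj {C Z : 𝒞} (pb : C ⟶ Z) (s : Z ⟶ C) (hs : s ≫ pb = 𝟙 Z)
    (hpr : 𝟙 C - pb ≫ s ∈ projAdd E C C) (B : 𝒞) :
    Function.Surjective (SGpre E pb B) := by
  intro y
  induction y using QuotientAddGroup.induction_on with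
  | H f =>
  refine ⟨QuotientAddGroup.mk (s ≫ f), ?_⟩
  rw [SGpre_mk, sgmk_eq]
  have key : pb ≫ s ≫ f - f = -((𝟙 C - pb ≫ s) ≫ f) := by
    rw [Preadditive.sub_comp, Category.id_comp, Category.assoc]
    abel
  rw [key]
  exact neg_mem (projAdd_comp_right f hpr)

omit hpi in
lemma SGpre_comp {X X' X'' : 𝒞} (a : X' ⟶ X) (b : X ⟶ X'') (Y : 𝒞) :
    SGpre E (a ≫ b) Y = (SGpre E a Y).comp (SGpre E b Y) := by
  refine AddMonoidHom.ext fun x => ?_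
  induction x using QuotientAddGroup.induction_on with
  | H f =>
  show (QuotientAddGroup.mk ((a ≫ b) ≫ f) : SG E X' Y) = QuotientAddGroup.mk (a ≫ b ≫ f)
  rw [Category.assoc]

lemma chain_exact (c0 : Confl E) (B : 𝒞) (n : ℕ) :
    (SGpre E ((chain Sd hpi c0 (n + 1)).i) B).range
      = (SGpre E ((chain Sd hpi c0 n).i) B).ker := by
  have hmid := SG_mid_contra hpi (chain Sd hpi c0 n).hconf B
  rw [hmid]
  have hi : (chain Sd hpi c0 (n + 1)).i = (rotP Sd hpi (chain Sd hpi c0 n)).i1 := rfl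
  rw [hi]
  set c := chain Sd hpi c0 n
  set R := rotP Sd hpi c
  have hp : c.p = R.i1 ≫ R.pb := R.hcomp.symm
  rw [hp, SGpre_comp]
  rw [AddMonoidHom.range_comp]
  have hsurj : (SGpre E R.pb B).range = ⊤ :=
    AddMonoidHom.range_eq_top.mpr (SGpre_section_surj R.pb R.s R.hs R.hproj B)
  rw [hsurj, ← AddMonoidHom.range_eq_map]
  rfl

lemma chain_X_stiso_Z (c0 : Confl E) (n : ℕ) :
    StIso E ((chain Sd hpi c0 (n + 2)).X) ((chain Sd hpi c0 n).Z) :=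
  rot_stiso Sd (rotP Sd hpi (chain Sd hpi c0 n))

lemma chain_stiso (c0 : Confl E) : ∀ m : ℕ,
    StIso E ((chain Sd hpi c0 (3 * m)).X) (SIter Sd m c0.X) ∧
    StIso E ((chain Sd hpi c0 (3 * m + 1)).X) (SIter Sd m c0.Y) ∧
    StIso E ((chain Sd hpi c0 (3 * m + 2)).X) (SIter Sd m c0.Z) := by
  intro m
  induction m with
  | zero =>
    refine ⟨stiso_refl _, stiso_refl _, ?_⟩
    exact chain_X_stiso_Z Sd hpi c0 0
  | succ m ih =>
    obtain ⟨ih1, ih2, ih3⟩ := ih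
    refine ⟨?_, ?_, ?_⟩
    · have e1 : StIso E ((chain Sd hpi c0 (3 * m + 1 + 2)).X)
          ((chain Sd hpi c0 (3 * m + 1)).Z) := chain_X_stiso_Z Sd hpi c0 (3 * m + 1)
      have e1' : StIso E ((chain Sd hpi c0 (3 * m + 3)).X)
          (Sd.S ((chain Sd hpi c0 (3 * m)).X)) := e1
      have e2 : StIso E (Sd.S ((chain Sd hpi c0 (3 * m)).X)) (Sd.S (SIter Sd m c0.X)) :=
        stiso_S Sd hpi ih1
      exact stiso_trans e1' e2
    · have e1 : StIso E ((chain Sd hpi c0 (3 * m + 2 + 2)).X)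
          ((chain Sd hpi c0 (3 * m + 2)).Z) := chain_X_stiso_Z Sd hpi c0 (3 * m + 2)
      have e1' : StIso E ((chain Sd hpi c0 (3 * m + 4)).X)
          (Sd.S ((chain Sd hpi c0 (3 * m + 1)).X)) := e1
      have e2 : StIso E (Sd.S ((chain Sd hpi c0 (3 * m + 1)).X)) (Sd.S (SIter Sd m c0.Y)) :=
        stiso_S Sd hpi ih2
      exact stiso_trans e1' e2
    · have e1 : StIso E ((chain Sd hpi c0 (3 * m + 3 + 2)).X)
          ((chain Sd hpi c0 (3 * m + 3)).Z) := chain_X_stiso_Z Sd hpi c0 (3 * m + 3)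
      have e1' : StIso E ((chain Sd hpi c0 (3 * m + 5)).X)
          (Sd.S ((chain Sd hpi c0 (3 * m + 2)).X)) := e1
      have e2 : StIso E (Sd.S ((chain Sd hpi c0 (3 * m + 2)).X)) (Sd.S (SIter Sd m c0.Z)) :=
        stiso_S Sd hpi ih3
      exact stiso_trans e1' e2

end Chain

end Euler
namespace Euler

variable {𝒞 : Type u} [Category.{v} 𝒞] [Preadditive 𝒞] [HasZeroObject 𝒞]
  [HasBinaryBiproducts 𝒞]
variable {E : ExactStructure 𝒞}

section CardHelpers

variable (E) in
lemma finite_stHom (homFin : ∀ A B : 𝒞, Finite (A ⟶ B)) (X Y : 𝒞) :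
    Finite (StHom E X Y) := by
  haveI := homFin X Y
  exact Finite.of_surjective (StHom.mk E) (by rintro ⟨f⟩; exact ⟨f, rfl⟩)

variable (E) in
lemma card_st_ne (homFin : ∀ A B : 𝒞, Finite (A ⟶ B)) (X Y : 𝒞) :
    Nat.card (StHom E X Y) ≠ 0 := by
  haveI := finite_stHom E homFin X Y
  haveI : Nonempty (StHom E X Y) := ⟨StHom.mk E 0⟩
  exact Nat.card_ne_zero.mpr ⟨‹_›, inferInstance⟩

lemma card_hom_ne (homFin : ∀ A B : 𝒞, Finite (A ⟶ B)) (X Y : 𝒞) :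
    Nat.card (X ⟶ Y) ≠ 0 := by
  haveI := homFin X Y
  haveI : Nonempty (X ⟶ Y) := ⟨0⟩
  exact Nat.card_ne_zero.mpr ⟨‹_›, inferInstance⟩

/-- The truncated relative Euler form as a single quotient. -/
lemma relEuler_eq (Sd : SuspData E) (homFin : ∀ A B : 𝒞, Finite (A ⟶ B)) (N : ℕ) (A B : 𝒞) :
    relEulerAt Sd N A B = (Nat.card (A ⟶ B) : ℚ) /
      ∏ m ∈ Finset.range (N + 1),
        (Nat.card (StHom E (SIter Sd m A) B) : ℚ) ^ ((-1 : ℤ) ^ m) := by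
  rw [hpeel N (fun m => Nat.card (StHom E (SIter Sd m A) B))]
  unfold relEulerAt
  have h0 : SIter Sd 0 A = A := rfl
  rw [h0]
  have hQ : (∏ m ∈ Finset.range N,
      (Nat.card (StHom E (SIter Sd (m + 1) A) B) : ℚ) ^ ((-1 : ℤ) ^ m)) ≠ 0 :=
    prod_sign_ne_zero (fun m => card_st_ne E homFin _ _) N
  have hs : (Nat.card (StHom E A B) : ℚ) ≠ 0 := by
    exact_mod_cast card_st_ne E homFin A B
  field_simp

end CardHelpers

section ContraSide

variable (Sd : SuspData E) (hpi : ∀ P : 𝒞, E.Proj P → E.Inj P)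
  (homFin : ∀ A B : 𝒞, Finite (A ⟶ B))
include hpi homFin

lemma contra_side {A₁ A₂ A₃ B : 𝒞} (i : A₁ ⟶ A₂) (p : A₂ ⟶ A₃) (h : E.conf i p) (N : ℕ)
    (hvan : Subsingleton (StHom E (SIter Sd (N + 1) A₁) B)) :
    relEulerAt Sd N A₂ B = relEulerAt Sd N A₁ B * relEulerAt Sd N A₃ B := by
  classical
  haveI : ∀ X Y : 𝒞, Finite (X ⟶ Y) := homFin
  set c0 : Confl E := ⟨A₁, A₂, A₃, i, p, h⟩ with hc0
  -- the top of the sequence vanishes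
  have htop : Nat.card (SG E ((chain Sd hpi c0 (3 * (N + 1))).X) B) = 1 := by
    rw [← cardSt, card_st_contra (chain_stiso Sd hpi c0 (N + 1)).1 B]
    haveI := finite_stHom E homFin (SIter Sd (N + 1) c0.X) B
    haveI : Subsingleton (StHom E (SIter Sd (N + 1) c0.X) B) := hvan
    exact Nat.card_eq_one_iff_unique.mpr ⟨‹_›, ⟨StHom.mk E 0⟩⟩
  have hblock := blockALT
    (G₁ := fun m => SG E ((chain Sd hpi c0 (3 * m)).X) B)
    (G₂ := fun m => SG E ((chain Sd hpi c0 (3 * m + 1)).X) B)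
    (G₃ := fun m => SG E ((chain Sd hpi c0 (3 * m + 2)).X) B)
    (fun m => SGpre E ((chain Sd hpi c0 (3 * m)).i) B)
    (fun m => SGpre E ((chain Sd hpi c0 (3 * m + 1)).i) B)
    (fun m => SGpre E ((chain Sd hpi c0 (3 * m + 2)).i) B)
    (fun m => chain_exact Sd hpi c0 B (3 * m))
    (fun m => chain_exact Sd hpi c0 B (3 * m + 1))
    (fun m => chain_exact Sd hpi c0 B (3 * m + 2))
    N htop
  -- identify the cardinalities in the products
  have hc1 : ∀ m : ℕ, Nat.card (SG E ((chain Sd hpi c0 (3 * m)).X) B)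
      = Nat.card (StHom E (SIter Sd m A₁) B) := fun m => by
    rw [← cardSt]; exact card_st_contra (chain_stiso Sd hpi c0 m).1 B
  have hc2 : ∀ m : ℕ, Nat.card (SG E ((chain Sd hpi c0 (3 * m + 1)).X) B)
      = Nat.card (StHom E (SIter Sd m A₂) B) := fun m => by
    rw [← cardSt]; exact card_st_contra (chain_stiso Sd hpi c0 m).2.1 B
  have hc3 : ∀ m : ℕ, Nat.card (SG E ((chain Sd hpi c0 (3 * m + 2)).X) B)
      = Nat.card (StHom E (SIter Sd m A₃) B) := fun m => by
    rw [← cardSt]; exact card_st_contra (chain_stiso Sd hpi c0 m).2.2 B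
  simp only [hc1, hc2, hc3] at hblock
  -- identify the images at the bottom
  have hu0 : (SGpre E ((chain Sd hpi c0 (3 * 0)).i) B) = SGpre E i B := rfl
  rw [hu0] at hblock
  -- Hom-level counting
  have hH2 : Nat.card (A₂ ⟶ B)
      = Nat.card (A₃ ⟶ B) * Nat.card (preHom i B).range := by
    rw [← card_ker_mul_card_range (preHom i B), ker_preHom h B,
      card_range_of_injective (preHom p B) (preHom_injective h B)]
  have hmap : projAdd E A₂ B ≤ (projAdd E A₁ B).comap (preHom i B) :=
    fun f hf => projAdd_comp_left i hf
  have hK : Nat.card (SGpre E i B).range * Nat.card (projAdd E A₁ B)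
      = Nat.card (preHom i B).range :=
    card_range_quotmap (preHom i B) (projAdd E A₂ B) (projAdd E A₁ B) hmap
      (projAdd_le_range_pre hpi h B)
  have hH1 : Nat.card (A₁ ⟶ B) = Nat.card (SG E A₁ B) * Nat.card (projAdd E A₁ B) :=
    AddSubgroup.card_eq_card_quotient_mul_card_addSubgroup _
  have hS10 : Nat.card (SG E A₁ B) = Nat.card (StHom E A₁ B) := (cardSt _ _).symm
  -- pass to ℚ
  rw [relEuler_eq Sd homFin N A₂ B, relEuler_eq Sd homFin N A₁ B,
    relEuler_eq Sd homFin N A₃ B]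
  have hS0A1 : (StHom E (SIter Sd 0 A₁) B) = (StHom E A₁ B) := rfl
  rw [hS0A1] at hblock
  set P1 := ∏ m ∈ Finset.range (N + 1),
    (Nat.card (StHom E (SIter Sd m A₁) B) : ℚ) ^ ((-1 : ℤ) ^ m) with hP1d
  set P2 := ∏ m ∈ Finset.range (N + 1),
    (Nat.card (StHom E (SIter Sd m A₂) B) : ℚ) ^ ((-1 : ℤ) ^ m) with hP2d
  set P3 := ∏ m ∈ Finset.range (N + 1),
    (Nat.card (StHom E (SIter Sd m A₃) B) : ℚ) ^ ((-1 : ℤ) ^ m) with hP3d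
  have hP1 : P1 ≠ 0 := prod_sign_ne_zero (fun m => card_st_ne E homFin _ _) _
  have hP2 : P2 ≠ 0 := prod_sign_ne_zero (fun m => card_st_ne E homFin _ _) _
  have hP3 : P3 ≠ 0 := prod_sign_ne_zero (fun m => card_st_ne E homFin _ _) _
  -- cast the ℕ identities
  have qH2 : (Nat.card (A₂ ⟶ B) : ℚ)
      = (Nat.card (A₃ ⟶ B) : ℚ) * (Nat.card (preHom i B).range : ℚ) := by
    exact_mod_cast congrArg (Nat.cast (R := ℚ)) hH2
  have qK : (Nat.card (SGpre E i B).range : ℚ) * (Nat.card (projAdd E A₁ B) : ℚ)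
      = (Nat.card (preHom i B).range : ℚ) := by
    exact_mod_cast congrArg (Nat.cast (R := ℚ)) hK
  have qH1 : (Nat.card (A₁ ⟶ B) : ℚ)
      = (Nat.card (StHom E A₁ B) : ℚ) * (Nat.card (projAdd E A₁ B) : ℚ) := by
    rw [hS10] at hH1
    exact_mod_cast congrArg (Nat.cast (R := ℚ)) hH1
  set q1 := (Nat.card (A₁ ⟶ B) : ℚ) with hq1d
  set q2 := (Nat.card (A₂ ⟶ B) : ℚ) with hq2d
  set q3 := (Nat.card (A₃ ⟶ B) : ℚ) with hq3d
  set Rq := (Nat.card (preHom i B).range : ℚ) with hRqd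
  set Kq := (Nat.card (SGpre E i B).range : ℚ) with hKqd
  set Prq := (Nat.card (projAdd E A₁ B) : ℚ) with hPrqd
  set S0q := (Nat.card (StHom E A₁ B) : ℚ) with hS0qd
  have hblock2 : P1 * P3 * Kq = S0q * P2 := hblock
  field_simp
  linear_combination (P1 * P3) * qH2 - (q3 * P1 * P3) * qK + (q3 * Prq) * hblock2
    - (q3 * P2) * qH1

end ContraSide

end Euler
namespace Euler

variable {𝒞 : Type u} [Category.{v} 𝒞] [Preadditive 𝒞] [HasZeroObject 𝒞]
  [HasBinaryBiproducts 𝒞]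
variable {E : ExactStructure 𝒞}

section CovSide

variable (Sd : SuspData E) (hpi : ∀ P : 𝒞, E.Proj P → E.Inj P)
  (homFin : ∀ A B : 𝒞, Finite (A ⟶ B))
include hpi homFin

lemma cov_side {A₁ A₂ A₃ B : 𝒞} (i : A₁ ⟶ A₂) (p : A₂ ⟶ A₃) (h : E.conf i p) (N : ℕ)
    (hvan : Subsingleton (StHom E (SIter Sd (N + 1) B) A₃)) :
    relEulerAt Sd N B A₂ = relEulerAt Sd N B A₁ * relEulerAt Sd N B A₃ := by
  classical
  haveI : ∀ X Y : 𝒞, Finite (X ⟶ Y) := homFin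
  have htop : Nat.card (SG E (SIter Sd (N + 1) B) A₃) = 1 := by
    rw [← cardSt]
    haveI := finite_stHom E homFin (SIter Sd (N + 1) B) A₃
    exact Nat.card_eq_one_iff_unique.mpr ⟨hvan, ⟨StHom.mk E 0⟩⟩
  have hblock := blockALT
    (G₁ := fun m => SG E (SIter Sd m B) A₃)
    (G₂ := fun m => SG E (SIter Sd m B) A₂)
    (G₃ := fun m => SG E (SIter Sd m B) A₁)
    (fun m => SGpost E (SIter Sd m B) p)
    (fun m => SGpost E (SIter Sd m B) i)
    (fun m => delta h (Sd.isConf (SIter Sd m B)) (Sd.proj (SIter Sd m B)))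
    (fun m => (SG_mid_cov h (SIter Sd m B)).symm)
    (fun m => (ker_SGpost_eq_range_delta h (Sd.isConf (SIter Sd m B))
      (Sd.proj (SIter Sd m B)) hpi).symm)
    (fun m => (ker_delta_eq_range_SGpost h (Sd.isConf (SIter Sd m B))
      (Sd.proj (SIter Sd m B)) hpi).symm)
    N htop
  -- identify cardinalities
  have hc : ∀ (X Y : 𝒞), Nat.card (SG E X Y) = Nat.card (StHom E X Y) :=
    fun X Y => (cardSt X Y).symm
  simp only [hc] at hblock
  have hu0 : SGpost E (SIter Sd 0 B) p = SGpost E B p := rfl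
  rw [hu0] at hblock
  have hty : ∀ Y : 𝒞, StHom E (SIter Sd 0 B) Y = StHom E B Y := fun _ => rfl
  rw [hty A₃] at hblock
  -- Hom-level counting
  have hH2 : Nat.card (B ⟶ A₂)
      = Nat.card (B ⟶ A₁) * Nat.card (postHom B p).range := by
    rw [← card_ker_mul_card_range (postHom B p), ker_postHom h B,
      card_range_of_injective (postHom B i) (postHom_injective h B)]
  have hmap : projAdd E B A₂ ≤ (projAdd E B A₃).comap (postHom B p) :=
    fun f hf => projAdd_comp_right p hf
  have hK : Nat.card (SGpost E B p).range * Nat.card (projAdd E B A₃)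
      = Nat.card (postHom B p).range :=
    card_range_quotmap (postHom B p) (projAdd E B A₂) (projAdd E B A₃) hmap
      (projAdd_le_range_post h B)
  have hH1 : Nat.card (B ⟶ A₃) = Nat.card (SG E B A₃) * Nat.card (projAdd E B A₃) :=
    AddSubgroup.card_eq_card_quotient_mul_card_addSubgroup _
  rw [hc B A₃] at hH1
  -- pass to ℚ
  rw [relEuler_eq Sd homFin N B A₂, relEuler_eq Sd homFin N B A₁,
    relEuler_eq Sd homFin N B A₃]
  set P1 := ∏ m ∈ Finset.range (N + 1),
    (Nat.card (StHom E (SIter Sd m B) A₁) : ℚ) ^ ((-1 : ℤ) ^ m) with hP1d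
  set P2 := ∏ m ∈ Finset.range (N + 1),
    (Nat.card (StHom E (SIter Sd m B) A₂) : ℚ) ^ ((-1 : ℤ) ^ m) with hP2d
  set P3 := ∏ m ∈ Finset.range (N + 1),
    (Nat.card (StHom E (SIter Sd m B) A₃) : ℚ) ^ ((-1 : ℤ) ^ m) with hP3d
  have hP1 : P1 ≠ 0 := prod_sign_ne_zero (fun m => card_st_ne E homFin _ _) _
  have hP2 : P2 ≠ 0 := prod_sign_ne_zero (fun m => card_st_ne E homFin _ _) _
  have hP3 : P3 ≠ 0 := prod_sign_ne_zero (fun m => card_st_ne E homFin _ _) _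
  have qH2 : (Nat.card (B ⟶ A₂) : ℚ)
      = (Nat.card (B ⟶ A₁) : ℚ) * (Nat.card (postHom B p).range : ℚ) := by
    exact_mod_cast congrArg (Nat.cast (R := ℚ)) hH2
  have qK : (Nat.card (SGpost E B p).range : ℚ) * (Nat.card (projAdd E B A₃) : ℚ)
      = (Nat.card (postHom B p).range : ℚ) := by
    exact_mod_cast congrArg (Nat.cast (R := ℚ)) hK
  have qH1 : (Nat.card (B ⟶ A₃) : ℚ)
      = (Nat.card (StHom E B A₃) : ℚ) * (Nat.card (projAdd E B A₃) : ℚ) := by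
    exact_mod_cast congrArg (Nat.cast (R := ℚ)) hH1
  set q1 := (Nat.card (B ⟶ A₁) : ℚ) with hq1d
  set q2 := (Nat.card (B ⟶ A₂) : ℚ) with hq2d
  set q3 := (Nat.card (B ⟶ A₃) : ℚ) with hq3d
  set Rq := (Nat.card (postHom B p).range : ℚ) with hRqd
  set Kq := (Nat.card (SGpost E B p).range : ℚ) with hKqd
  set Prq := (Nat.card (projAdd E B A₃) : ℚ) with hPrqd
  set S0q := (Nat.card (StHom E B A₃) : ℚ) with hS0qd
  have hblock2 : P3 * P1 * Kq = S0q * P2 := hblock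
  field_simp
  linear_combination (P1 * P3) * qH2 - (q1 * P1 * P3) * qK + (q1 * Prq) * hblock2
    - (q1 * P2) * qH1

end CovSide

end Euler
/-- Lemma 4.1.  Let `F` be a Frobenius category satisfying (C1), (C2) whose
stable category `F̄` is left locally homologically finite.  Then the relative Euler form
`⟨A,B⟩ = (|Hom_F(A,B)| / |Hom_F̄(A,B)|) ⬝ ∏_{i>0} |Ext^{-i}_F̄(A,B)|^((-1)^(i-1))`
descends to a well-defined biadditive map `K₀(F) × K₀(F) → ℚˣ`: for every conflation
`A₁ ↣ A₂ ↠ A₃` in `F` and every object `B`,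
`⟨A₂,B⟩ = ⟨A₁,B⟩ ⬝ ⟨A₃,B⟩` and `⟨B,A₂⟩ = ⟨B,A₁⟩ ⬝ ⟨B,A₃⟩`.
(The form is expressed by its truncation `relEulerAt Sd N`, which computes it as soon as all
the stable `Ext^{-j}` with `j > N` between the objects involved vanish.) -/
theorem relative_euler_form_multiplicative
    {k : Type} [Field k] [Finite k]
    {𝒞 : Type u} [Category.{v} 𝒞] [Preadditive 𝒞] [CategoryTheory.Linear k 𝒞]
    [HasZeroObject 𝒞] [HasBinaryBiproducts 𝒞] [EssentiallySmall.{v} 𝒞]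
    [IsIdempotentComplete 𝒞]
    (E : ExactStructure 𝒞) (hFrob : IsFrobenius E)
    (homFin : ∀ A B : 𝒞, Finite (A ⟶ B))
    (Sd : SuspData E)
    (llhf : ∀ A B : 𝒞, ∃ N : ℕ, ∀ i : ℕ, N < i → Subsingleton (StHom E (SIter Sd i A) B)) :
    ∀ ⦃A₁ A₂ A₃ : 𝒞⦄ (i : A₁ ⟶ A₂) (p : A₂ ⟶ A₃), E.conf i p → ∀ (B : 𝒞) (N : ℕ),
      (∀ j : ℕ, N < j →
        (Subsingleton (StHom E (SIter Sd j A₁) B) ∧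
         Subsingleton (StHom E (SIter Sd j A₂) B) ∧
         Subsingleton (StHom E (SIter Sd j A₃) B) ∧
         Subsingleton (StHom E (SIter Sd j B) A₁) ∧
         Subsingleton (StHom E (SIter Sd j B) A₂) ∧
         Subsingleton (StHom E (SIter Sd j B) A₃))) →
      relEulerAt Sd N A₂ B = relEulerAt Sd N A₁ B * relEulerAt Sd N A₃ B ∧
      relEulerAt Sd N B A₂ = relEulerAt Sd N B A₁ * relEulerAt Sd N B A₃ := by
  intro A₁ A₂ A₃ i p h B N hvan
  have hpi : ∀ P : 𝒞, E.Proj P → E.Inj P := fun P hP => (hFrob.proj_iff_inj P).mp hP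
  constructor
  · exact Euler.contra_side Sd hpi homFin i p h N ((hvan (N + 1) (Nat.lt_succ_self N)).1)
  · exact Euler.cov_side Sd hpi homFin i p h N
      ((hvan (N + 1) (Nat.lt_succ_self N)).2.2.2.2.2)

end HallPaper
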